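/- arXiv:2108.06929 — 5 statements merged into one kernel-verified Lean document; each statement's English description precedes it below -/
import Mathlib

section
/- Let a, b > 0, let 0 < p < 1 with q given by 1/p + 1/q = 1 (so q < 0), and let t ∈ (0,1). Then inf_{λ∈(0,1)} [ (1−t)^{1/p}(1−λ)^{1/q} a + t^{1/p} λ^{1/q} b ] = ((1−t) a^p + t b^p)^{1/p}. -/
open Set

theorem rev_young {u v p q : ℝ} (hu : 0 < u) (hv : 0 < v)
    (hp0 : 0 < p) (hp1 : p < 1) (hpq : 1 / p + 1 / q = 1) :
    u ^ p / p + v ^ q / q ≤ u * v := by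
  have hq0 : q ≠ 0 := by
    intro h; rw [h, div_zero] at hpq
    have : p = 1 := by field_simp at hpq; linarith
    linarith
  have hq : 1 / q = (p - 1) / p := by field_simp at hpq ⊢; linarith
  have hqv : q = -p / (1 - p) := by
    have h1 : q * (p - 1) = p := by
      field_simp at hq
      linarith [hq]
    rw [eq_div_iff (by intro h; apply hp1.ne; linarith : (1:ℝ) - p ≠ 0)]
    linear_combination -h1
  have hPQ : (1 / p).HolderConjugate (1 / (1 - p)) := by
    rw [Real.holderConjugate_iff]
    constructor
    · rw [lt_div_iff₀ hp0]; linarith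
    · rw [one_div, one_div, inv_inv, inv_inv]; ring
  have hyoung := Real.young_inequality_of_nonneg
    (a := (u * v) ^ p) (b := v ^ (-p))
    (by positivity) (by positivity) hPQ
  have h1 : ((u * v) ^ p) ^ (1 / p) = u * v := by
    rw [← Real.rpow_mul (by positivity), mul_one_div_cancel hp0.ne', Real.rpow_one]
  have h2 : ((v : ℝ) ^ (-p)) ^ (1 / (1 - p)) = v ^ q := by
    rw [← Real.rpow_mul hv.le, hqv]; ring_nf
  have h3 : (u * v) ^ p * v ^ (-p) = u ^ p := by
    rw [Real.mul_rpow hu.le hv.le, mul_assoc, ← Real.rpow_add hv]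
    simp
  rw [h1, h2, h3] at hyoung
  -- hyoung : u ^ p ≤ (u*v)/(1/p) + v^q/(1/(1-p))
  have hvq : 0 < v ^ q := by positivity
  have h4 : v ^ q / q = v ^ q * ((p - 1) / p) := by
    rw [div_eq_mul_one_div, hq]
  rw [div_div_eq_mul_div, div_div_eq_mul_div, div_one, div_one] at hyoung
  rw [h4]
  have hup : u ^ p / p ≤ u * v + v ^ q * (1 - p) / p := by
    rw [div_le_iff₀ hp0]
    have he : (u * v + v ^ q * (1 - p) / p) * p = u * v * p + v ^ q * (1 - p) := by
      field_simp
    linarith [hyoung, he.ge, he.le]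
  have h5 : v ^ q * ((p - 1) / p) = -(v ^ q * (1 - p) / p) := by ring
  linarith [hup]

theorem lower_bd {A B p q l : ℝ} (hA : 0 < A) (hB : 0 < B)
    (hp0 : 0 < p) (hp1 : p < 1) (hpq : 1 / p + 1 / q = 1) (hl : l ∈ Ioo (0:ℝ) 1) :
    (A ^ p + B ^ p) ^ (1 / p) ≤ A * (1 - l) ^ (1 / q) + B * l ^ (1 / q) := by
  have hq0 : q ≠ 0 := by
    intro h; rw [h, div_zero] at hpq
    have : p = 1 := by field_simp at hpq; linarith
    linarith
  obtain ⟨hl0, hl1⟩ := hl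
  have h1l : 0 < 1 - l := by linarith
  set T : ℝ := (A ^ p + B ^ p) ^ (1 / p) with hTdef
  have hSpos : 0 < A ^ p + B ^ p := by positivity
  have hT : 0 < T := by positivity
  have hTp : T ^ p = A ^ p + B ^ p := by
    rw [hTdef, ← Real.rpow_mul hSpos.le, one_div, inv_mul_cancel₀ hp0.ne', Real.rpow_one]
  have hy1 : ((1 - l) ^ (1 / q)) ^ q = 1 - l := by
    rw [← Real.rpow_mul h1l.le, one_div, inv_mul_cancel₀ hq0, Real.rpow_one]
  have hy2 : (l ^ (1 / q)) ^ q = l := by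
    rw [← Real.rpow_mul hl0.le, one_div, inv_mul_cancel₀ hq0, Real.rpow_one]
  have hdA : (A / T) ^ p = A ^ p / T ^ p := Real.div_rpow hA.le hT.le p
  have hdB : (B / T) ^ p = B ^ p / T ^ p := Real.div_rpow hB.le hT.le p
  have hy1p : (0:ℝ) < (1 - l) ^ (1 / q) := by positivity
  have hy2p : (0:ℝ) < l ^ (1 / q) := by positivity
  have k1 := rev_young (div_pos hA hT) hy1p hp0 hp1 hpq
  have k2 := rev_young (div_pos hB hT) hy2p hp0 hp1 hpq
  rw [hy1, hdA] at k1
  rw [hy2, hdB] at k2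
  have hsum : A ^ p / T ^ p / p + B ^ p / T ^ p / p + ((1 - l) / q + l / q)
      ≤ A / T * (1 - l) ^ (1 / q) + B / T * l ^ (1 / q) := by linarith
  have hone : A ^ p / T ^ p / p + B ^ p / T ^ p / p + ((1 - l) / q + l / q) = 1 := by
    have e1 : A ^ p / T ^ p / p + B ^ p / T ^ p / p = 1 / p := by
      have h1 : A ^ p + B ^ p ≠ 0 := hSpos.ne'
      have h2 : p ≠ 0 := hp0.ne'
      rw [hTp]
      field_simp
    have e2 : (1 - l) / q + l / q = 1 / q := by
      rw [← add_div]; ring_nf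
    rw [e1, e2]; exact hpq
  rw [hone] at hsum
  have := mul_le_mul_of_nonneg_left hsum hT.le
  calc T = T * 1 := by ring
    _ ≤ T * (A / T * (1 - l) ^ (1 / q) + B / T * l ^ (1 / q)) := this
    _ = A * (1 - l) ^ (1 / q) + B * l ^ (1 / q) := by field_simp

theorem value_at {A B p q : ℝ} (hA : 0 < A) (hB : 0 < B)
    (hp0 : 0 < p) (hp1 : p < 1) (hpq : 1 / p + 1 / q = 1) :
    A * (1 - B ^ p / (A ^ p + B ^ p)) ^ (1 / q)
      + B * (B ^ p / (A ^ p + B ^ p)) ^ (1 / q) = (A ^ p + B ^ p) ^ (1 / p) := by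
  have hq0 : q ≠ 0 := by
    intro h; rw [h, div_zero] at hpq
    have : p = 1 := by field_simp at hpq; linarith
    linarith
  have hS : 0 < A ^ p + B ^ p := by positivity
  have hqp : q + p = p * q := by field_simp at hpq; linarith
  have hpe : 1 + p * (1 / q) = p := by field_simp; linarith
  have h1m : 1 - B ^ p / (A ^ p + B ^ p) = A ^ p / (A ^ p + B ^ p) := by
    field_simp
    ring
  rw [h1m]
  have key : ∀ X : ℝ, 0 < X →
      X * (X ^ p / (A ^ p + B ^ p)) ^ (1 / q) = X ^ p / (A ^ p + B ^ p) ^ (1 / q) := by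
    intro X hX
    rw [Real.div_rpow (by positivity) hS.le, ← Real.rpow_mul hX.le]
    calc X * (X ^ (p * (1 / q)) / (A ^ p + B ^ p) ^ (1 / q))
        = X ^ (1:ℝ) * X ^ (p * (1 / q)) / (A ^ p + B ^ p) ^ (1 / q) := by
          rw [Real.rpow_one]; ring
      _ = X ^ (1 + p * (1 / q)) / (A ^ p + B ^ p) ^ (1 / q) := by
          rw [← Real.rpow_add hX]
      _ = X ^ p / (A ^ p + B ^ p) ^ (1 / q) := by rw [hpe]
  rw [key A hA, key B hB, ← add_div,
    show (1 / p) = 1 - 1 / q by linarith, Real.rpow_sub hS, Real.rpow_one]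

/-- For `a, b > 0`, `0 < p < 1` with `1/p + 1/q = 1` (so `q < 0`)
and `t ∈ (0,1)`,
`inf_{λ∈(0,1)} [(1−t)^{1/p}(1−λ)^{1/q} a + t^{1/p} λ^{1/q} b] = ((1−t)a^p + t b^p)^{1/p}`. -/
theorem stmt_2 (a b p q t : ℝ) (ha : 0 < a) (hb : 0 < b)
    (hp0 : 0 < p) (hp1 : p < 1) (hpq : 1 / p + 1 / q = 1) (ht : t ∈ Ioo (0 : ℝ) 1) :
    (⨅ l : Ioo (0 : ℝ) 1,
        ((1 - t) ^ (1 / p) * (1 - (l : ℝ)) ^ (1 / q) * a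
          + t ^ (1 / p) * (l : ℝ) ^ (1 / q) * b))
      = ((1 - t) * a ^ p + t * b ^ p) ^ (1 / p) := by
  obtain ⟨ht0, ht1⟩ := ht
  have h1t : 0 < 1 - t := by linarith
  set A := (1 - t) ^ (1 / p) * a with hAdef
  set B := t ^ (1 / p) * b with hBdef
  have hA : 0 < A := by positivity
  have hB : 0 < B := by positivity
  have hAp : A ^ p = (1 - t) * a ^ p := by
    rw [hAdef, Real.mul_rpow (by positivity) ha.le, ← Real.rpow_mul h1t.le,
      one_div, inv_mul_cancel₀ hp0.ne', Real.rpow_one]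
  have hBp : B ^ p = t * b ^ p := by
    rw [hBdef, Real.mul_rpow (by positivity) hb.le, ← Real.rpow_mul ht0.le,
      one_div, inv_mul_cancel₀ hp0.ne', Real.rpow_one]
  have hfun : ∀ l : Ioo (0:ℝ) 1,
      (1 - t) ^ (1 / p) * (1 - (l : ℝ)) ^ (1 / q) * a + t ^ (1 / p) * (l : ℝ) ^ (1 / q) * b
        = A * (1 - (l : ℝ)) ^ (1 / q) + B * (l : ℝ) ^ (1 / q) := by
    intro l; rw [hAdef, hBdef]; ring
  rw [show (1 - t) * a ^ p + t * b ^ p = A ^ p + B ^ p by rw [hAp, hBp]]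
  have lmem : B ^ p / (A ^ p + B ^ p) ∈ Ioo (0:ℝ) 1 := by
    constructor
    · positivity
    · rw [div_lt_one (by positivity)]
      nlinarith [Real.rpow_pos_of_pos hA p]
  apply le_antisymm
  · have hbdd : BddBelow (Set.range fun l : Ioo (0:ℝ) 1 =>
        ((1 - t) ^ (1 / p) * (1 - (l : ℝ)) ^ (1 / q) * a
          + t ^ (1 / p) * (l : ℝ) ^ (1 / q) * b)) := by
      refine ⟨(A ^ p + B ^ p) ^ (1 / p), ?_⟩
      rintro x ⟨l, rfl⟩
      exact le_of_le_of_eq (lower_bd hA hB hp0 hp1 hpq l.2) (hfun l).symm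
    refine (ciInf_le hbdd ⟨_, lmem⟩).trans_eq ?_
    exact (hfun ⟨_, lmem⟩).trans (value_at hA hB hp0 hp1 hpq)
  · haveI : Nonempty ↑(Ioo (0:ℝ) 1) := ⟨⟨1/2, by norm_num⟩⟩
    exact le_ciInf fun l =>
      le_of_le_of_eq (lower_bd hA hB hp0 hp1 hpq l.2) (hfun l).symm
end

section
/- Let 0 < p < 1 with q given by 1/p + 1/q = 1 (so q < 0), let K and L be convex bodies in ℝ^n (compact convex sets with nonempty interior) each containing the origin in its interior, and let α, β > 0. Then ⋂_{λ∈(0,1)} ( α^{1/p}(1−λ)^{1/q} K + β^{1/p} λ^{1/q} L ) = { x ∈ ℝ^n : ⟨x,u⟩ ≤ (α h_K(u)^p + β h_L(u)^p)^{1/p} for every unit vector u ∈ S^{n−1} }, where the sum is the Minkowski sum of sets. -/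
open Set
open scoped Pointwise RealInnerProductSpace

/-- The support function of a set `K`: `h_K(u) = sup_{y ∈ K} ⟨u, y⟩`. -/
noncomputable def suppFn {n : ℕ} (K : Set (EuclideanSpace ℝ (Fin n)))
    (u : EuclideanSpace ℝ (Fin n)) : ℝ :=
  sSup ((fun y => ⟪u, y⟫) '' K)

section Aux

variable {n : ℕ} {K L : Set (EuclideanSpace ℝ (Fin n))} {u : EuclideanSpace ℝ (Fin n)}

lemma suppFn_bddAbove (hK : IsCompact K) (u : EuclideanSpace ℝ (Fin n)) :
    BddAbove ((fun y => ⟪u, y⟫) '' K) :=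
  (hK.image (continuous_const.inner continuous_id)).bddAbove

lemma le_suppFn (hK : IsCompact K) {x : EuclideanSpace ℝ (Fin n)} (hx : x ∈ K) :
    ⟪u, x⟫ ≤ suppFn K u :=
  le_csSup (suppFn_bddAbove hK u) ⟨x, hx, rfl⟩

lemma suppFn_pos (hK : IsCompact K) (hK0 : (0 : EuclideanSpace ℝ (Fin n)) ∈ interior K)
    (hu : ‖u‖ = 1) : 0 < suppFn K u := by
  obtain ⟨r, hr, hball⟩ := Metric.mem_nhds_iff.1 (mem_interior_iff_mem_nhds.1 hK0)
  have hmem : (r / 2) • u ∈ K := by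
    apply hball
    rw [Metric.mem_ball, dist_zero_right, norm_smul, hu, mul_one, Real.norm_eq_abs,
      abs_of_pos (half_pos hr)]
    linarith
  have h := le_suppFn (u := u) hK hmem
  rw [real_inner_smul_right, real_inner_self_eq_norm_mul_norm, hu] at h
  nlinarith

lemma suppFn_smul (hK : IsCompact K) {c : ℝ} (hc : 0 ≤ c) :
    suppFn (c • K) u = c * suppFn K u := by
  have himg : (fun y => ⟪u, y⟫) '' (c • K) = c • ((fun y => ⟪u, y⟫) '' K) := by
    rw [← Set.image_smul, Set.image_image, ← Set.image_smul, Set.image_image]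
    simp only [real_inner_smul_right, smul_eq_mul]
  rw [suppFn, himg, Real.sSup_smul_of_nonneg hc, smul_eq_mul, suppFn]

lemma suppFn_add (hK : IsCompact K) (hL : IsCompact L) (hKne : K.Nonempty) (hLne : L.Nonempty) :
    suppFn (K + L) u = suppFn K u + suppFn L u := by
  have himg : (fun y => ⟪u, y⟫) '' (K + L)
      = ((fun y => ⟪u, y⟫) '' K) + ((fun y => ⟪u, y⟫) '' L) := by
    ext r
    simp only [Set.mem_image, Set.mem_add]
    constructor
    · rintro ⟨y, ⟨a, ha, b, hb, rfl⟩, rfl⟩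
      exact ⟨⟪u, a⟫, ⟨a, ha, rfl⟩, ⟪u, b⟫, ⟨b, hb, rfl⟩, (inner_add_right u a b).symm⟩
    · rintro ⟨_, ⟨a, ha, rfl⟩, _, ⟨b, hb, rfl⟩, rfl⟩
      exact ⟨a + b, ⟨a, ha, b, hb, rfl⟩, inner_add_right u a b⟩
  rw [suppFn, himg, csSup_add (hKne.image _) (suppFn_bddAbove hK u)
    (hLne.image _) (suppFn_bddAbove hL u)]
  rfl

lemma mem_of_suppFn (hC : IsCompact K) (hconv : Convex ℝ K) (hne : K.Nonempty)
    {x : EuclideanSpace ℝ (Fin n)}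
    (h : ∀ w : EuclideanSpace ℝ (Fin n), ‖w‖ = 1 → ⟪x, w⟫ ≤ suppFn K w) : x ∈ K := by
  by_contra hx
  obtain ⟨f, c, hfc, hcx⟩ := geometric_hahn_banach_closed_point hconv hC.isClosed hx
  set v := (InnerProductSpace.toDual ℝ (EuclideanSpace ℝ (Fin n))).symm f with hv
  have hvy : ∀ y, ⟪v, y⟫ = f y := fun y => InnerProductSpace.toDual_symm_apply
  have hv0 : v ≠ 0 := by
    rintro h0
    obtain ⟨y₀, hy₀⟩ := hne
    have h1 : f y₀ < c := hfc y₀ hy₀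
    have h2 : f y₀ = 0 := by rw [← hvy, h0, inner_zero_left]
    have h3 : f x = 0 := by rw [← hvy, h0, inner_zero_left]
    rw [h3] at hcx; rw [h2] at h1; linarith
  set w := ‖v‖⁻¹ • v with hw
  have hwnorm : ‖w‖ = 1 := norm_smul_inv_norm hv0
  have hvnorm : (0 : ℝ) < ‖v‖⁻¹ := by
    have : 0 < ‖v‖ := norm_pos_iff.2 hv0
    positivity
  have hsup : suppFn K w ≤ ‖v‖⁻¹ * c := by
    apply csSup_le (hne.image _)
    rintro r ⟨y, hy, rfl⟩
    beta_reduce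
    rw [real_inner_smul_left, hvy]
    exact mul_le_mul_of_nonneg_left (hfc y hy).le hvnorm.le
  have hx' : ⟪x, w⟫ ≤ suppFn K w := h w hwnorm
  have hxe : ⟪x, w⟫ = ‖v‖⁻¹ * f x := by
    rw [real_inner_comm, hw, real_inner_smul_left, hvy]
  nlinarith [mul_lt_mul_of_pos_left hcx hvnorm]

end Aux

section Alg

variable {p q α β s t l : ℝ}

lemma exp_facts (hp0 : 0 < p) (hpq : 1 / p + 1 / q = 1) :
    p * (1 / q) = p - 1 ∧ (1 / p) * p = 1 := by
  have hp : p ≠ 0 := hp0.ne'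
  constructor
  · have h : p * (1 / p + 1 / q) = p * 1 := by rw [hpq]
    rw [mul_add, mul_one_div_cancel hp] at h
    linarith
  · rw [one_div_mul_cancel hp]

lemma hxp_aux (hp0 : 0 < p) (hpq : 1 / p + 1 / q = 1) {γ m w : ℝ}
    (hγ : 0 < γ) (hm : 0 < m) (hw : 0 < w) :
    (γ ^ (1/p) * m ^ (1/q) * w) ^ p * m ^ (1 - p) = γ * w ^ p := by
  obtain ⟨hpq1, hpq2⟩ := exp_facts hp0 hpq
  rw [Real.mul_rpow (by positivity) hw.le,
    Real.mul_rpow (by positivity) (by positivity),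
    ← Real.rpow_mul hγ.le, ← Real.rpow_mul hm.le, hpq2,
    show (1/q) * p = p - 1 by linarith, Real.rpow_one]
  have hmm : m ^ (p - 1) * m ^ (1 - p) = 1 := by
    rw [← Real.rpow_add hm]; norm_num
  calc γ * m ^ (p-1) * w ^ p * m ^ (1-p)
      = γ * w ^ p * (m ^ (p-1) * m ^ (1-p)) := by ring
    _ = γ * w ^ p := by rw [hmm, mul_one]

lemma algEq (hp0 : 0 < p) (hpq : 1 / p + 1 / q = 1)
    (hα : 0 < α) (hβ : 0 < β) (hs : 0 < s) (ht : 0 < t) :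
    α ^ (1/p) * (1 - β * t ^ p / (α * s ^ p + β * t ^ p)) ^ (1/q) * s
      + β ^ (1/p) * (β * t ^ p / (α * s ^ p + β * t ^ p)) ^ (1/q) * t
      = (α * s ^ p + β * t ^ p) ^ (1/p) := by
  obtain ⟨hpq1, hpq2⟩ := exp_facts hp0 hpq
  have hsp : (0:ℝ) < s ^ p := Real.rpow_pos_of_pos hs p
  have htp : (0:ℝ) < t ^ p := Real.rpow_pos_of_pos ht p
  have hS : (0:ℝ) < α * s ^ p + β * t ^ p := by positivity
  set S := α * s ^ p + β * t ^ p with hSdef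
  have h1 : 1 - β * t ^ p / S = α * s ^ p / S := by
    field_simp
    rw [hSdef]; ring
  rw [h1]
  have hterm : ∀ γ z : ℝ, 0 < γ → 0 < z →
      γ ^ (1/p) * (γ * z ^ p / S) ^ (1/q) * z = γ * z ^ p / S ^ (1/q) := by
    intro γ z hγ hz
    have hzp : (0:ℝ) < z ^ p := Real.rpow_pos_of_pos hz p
    rw [Real.div_rpow (by positivity) hS.le, Real.mul_rpow hγ.le hzp.le,
      ← Real.rpow_mul hz.le, show p * (1/q) = p - 1 from hpq1]
    have h2 : γ ^ (1/p) * (γ ^ (1/q) * z ^ (p-1) / S ^ (1/q)) * z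
        = (γ ^ (1/p) * γ ^ (1/q)) * (z ^ (p-1) * z ^ (1:ℝ)) / S ^ (1/q) := by
      rw [Real.rpow_one]; ring
    rw [h2, ← Real.rpow_add hγ, hpq, Real.rpow_one, ← Real.rpow_add hz]
    norm_num
  rw [hterm α s hα hs, hterm β t hβ ht, ← add_div]
  have h2 : (1:ℝ) - 1/q = 1/p := by linarith [hpq]
  rw [show S ^ (1/p) = S ^ ((1:ℝ) - 1/q) by rw [h2], Real.rpow_sub hS, Real.rpow_one]

lemma algIneq (hp0 : 0 < p) (hp1 : p < 1) (hpq : 1 / p + 1 / q = 1)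
    (hα : 0 < α) (hβ : 0 < β) (hs : 0 < s) (ht : 0 < t) (hl : l ∈ Set.Ioo (0:ℝ) 1) :
    (α * s ^ p + β * t ^ p) ^ (1/p)
      ≤ α ^ (1/p) * (1 - l) ^ (1/q) * s + β ^ (1/p) * l ^ (1/q) * t := by
  obtain ⟨hl0, hl1⟩ := hl
  have hl1' : (0:ℝ) < 1 - l := by linarith
  set x := α ^ (1/p) * (1 - l) ^ (1/q) * s with hxdef
  set y := β ^ (1/p) * l ^ (1/q) * t with hydef
  have hx : 0 < x :=
    mul_pos (mul_pos (Real.rpow_pos_of_pos hα _) (Real.rpow_pos_of_pos hl1' _)) hs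
  have hy : 0 < y :=
    mul_pos (mul_pos (Real.rpow_pos_of_pos hβ _) (Real.rpow_pos_of_pos hl0 _)) ht
  set z := x + y with hzdef
  have hz : 0 < z := by positivity
  have hzp : (0:ℝ) < z ^ p := Real.rpow_pos_of_pos hz p
  have e1 : α * s ^ p = x ^ p * (1 - l) ^ (1 - p) := (hxp_aux hp0 hpq hα hl1' hs).symm
  have e2 : β * t ^ p = y ^ p * l ^ (1 - p) := (hxp_aux hp0 hpq hβ hl0 ht).symm
  have d1 : x ^ p = z ^ p * (x / z) ^ p := by
    rw [Real.div_rpow hx.le hz.le]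
    field_simp
  have d2 : y ^ p = z ^ p * (y / z) ^ p := by
    rw [Real.div_rpow hy.le hz.le]
    field_simp
  have g1 : (x/z) ^ p * (1-l) ^ (1-p) ≤ p * (x/z) + (1-p) * (1-l) :=
    Real.geom_mean_le_arith_mean2_weighted hp0.le (by linarith) (by positivity) hl1'.le
      (by ring)
  have g2 : (y/z) ^ p * l ^ (1-p) ≤ p * (y/z) + (1-p) * l :=
    Real.geom_mean_le_arith_mean2_weighted hp0.le (by linarith) (by positivity) hl0.le
      (by ring)
  have hdiv : x / z + y / z = 1 := by
    rw [← add_div, hzdef, div_self hz.ne']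
  have key : α * s ^ p + β * t ^ p ≤ z ^ p := by
    calc α * s ^ p + β * t ^ p
        = z ^ p * ((x/z) ^ p * (1-l) ^ (1-p) + (y/z) ^ p * l ^ (1-p)) := by
          rw [e1, e2, d1, d2]; ring
      _ ≤ z ^ p * ((p * (x/z) + (1-p) * (1-l)) + (p * (y/z) + (1-p) * l)) :=
          mul_le_mul_of_nonneg_left (add_le_add g1 g2) hzp.le
      _ = z ^ p := by
          have : (p * (x/z) + (1-p) * (1-l)) + (p * (y/z) + (1-p) * l) = 1 := by
            linear_combination p * hdiv
          rw [this, mul_one]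
  calc (α * s ^ p + β * t ^ p) ^ (1/p)
      ≤ (z ^ p) ^ (1/p) := Real.rpow_le_rpow (by positivity) key (by positivity)
    _ = z := by
        rw [← Real.rpow_mul hz.le, mul_one_div_cancel hp0.ne', Real.rpow_one]

end Alg

/-- For `0 < p < 1` with `1/p + 1/q = 1` (so `q < 0`), convex bodies
`K, L ⊆ ℝⁿ` containing the origin in their interiors and `α, β > 0`, the intersection
`⋂_{λ∈(0,1)} (α^{1/p}(1−λ)^{1/q} K + β^{1/p} λ^{1/q} L)` coincides with the Wulff shape
`{x : ⟨x,u⟩ ≤ (α h_K(u)^p + β h_L(u)^p)^{1/p} for all unit vectors u}`. -/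
theorem stmt_3 {n : ℕ} (p q α β : ℝ) (hp0 : 0 < p) (hp1 : p < 1)
    (hpq : 1 / p + 1 / q = 1) (hα : 0 < α) (hβ : 0 < β)
    (K L : Set (EuclideanSpace ℝ (Fin n)))
    (hKcomp : IsCompact K) (hKconv : Convex ℝ K)
    (hK0 : (0 : EuclideanSpace ℝ (Fin n)) ∈ interior K)
    (hLcomp : IsCompact L) (hLconv : Convex ℝ L)
    (hL0 : (0 : EuclideanSpace ℝ (Fin n)) ∈ interior L) :
    (⋂ l ∈ Ioo (0 : ℝ) 1,
        (α ^ (1 / p) * (1 - l) ^ (1 / q)) • K + (β ^ (1 / p) * l ^ (1 / q)) • L)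
      = {x : EuclideanSpace ℝ (Fin n) |
          ∀ u : EuclideanSpace ℝ (Fin n), ‖u‖ = 1 →
            ⟪x, u⟫ ≤ (α * suppFn K u ^ p + β * suppFn L u ^ p) ^ (1 / p)} := by
  have hKne : K.Nonempty := ⟨0, interior_subset hK0⟩
  have hLne : L.Nonempty := ⟨0, interior_subset hL0⟩
  ext x
  simp only [Set.mem_iInter, Set.mem_setOf_eq]
  constructor
  · intro hx u hu
    set s := suppFn K u with hsdef
    set t := suppFn L u with htdef
    have hs : 0 < s := suppFn_pos hKcomp hK0 hu
    have ht : 0 < t := suppFn_pos hLcomp hL0 hu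
    have hsp : (0:ℝ) < s ^ p := Real.rpow_pos_of_pos hs p
    have htp : (0:ℝ) < t ^ p := Real.rpow_pos_of_pos ht p
    have hS : (0:ℝ) < α * s ^ p + β * t ^ p := by positivity
    set l₀ := β * t ^ p / (α * s ^ p + β * t ^ p) with hl₀def
    have hl₀ : l₀ ∈ Ioo (0:ℝ) 1 := by
      constructor
      · positivity
      · rw [hl₀def, div_lt_one hS]
        nlinarith
    have hmem := hx l₀ hl₀
    rw [Set.mem_add] at hmem
    obtain ⟨k, hk, m, hm, hxeq⟩ := hmem
    obtain ⟨k', hk', rfl⟩ := hk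
    obtain ⟨m', hm', rfl⟩ := hm
    have ha : 0 < α ^ (1/p) * (1 - l₀) ^ (1/q) := by
      have : (0:ℝ) < 1 - l₀ := by linarith [hl₀.2]
      exact mul_pos (Real.rpow_pos_of_pos hα _) (Real.rpow_pos_of_pos this _)
    have hb : 0 < β ^ (1/p) * l₀ ^ (1/q) :=
      mul_pos (Real.rpow_pos_of_pos hβ _) (Real.rpow_pos_of_pos hl₀.1 _)
    calc ⟪x, u⟫ = (α ^ (1/p) * (1 - l₀) ^ (1/q)) * ⟪u, k'⟫
          + (β ^ (1/p) * l₀ ^ (1/q)) * ⟪u, m'⟫ := by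
          rw [real_inner_comm, ← hxeq, inner_add_right, real_inner_smul_right,
            real_inner_smul_right]
      _ ≤ (α ^ (1/p) * (1 - l₀) ^ (1/q)) * s + (β ^ (1/p) * l₀ ^ (1/q)) * t :=
          add_le_add (mul_le_mul_of_nonneg_left (le_suppFn hKcomp hk') ha.le)
            (mul_le_mul_of_nonneg_left (le_suppFn hLcomp hm') hb.le)
      _ = (α * s ^ p + β * t ^ p) ^ (1/p) := by
          rw [hl₀def]
          exact algEq hp0 hpq hα hβ hs ht
  · intro hx l hl
    have hl1' : (0:ℝ) < 1 - l := by linarith [hl.2]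
    have ha : 0 < α ^ (1/p) * (1 - l) ^ (1/q) :=
      mul_pos (Real.rpow_pos_of_pos hα _) (Real.rpow_pos_of_pos hl1' _)
    have hb : 0 < β ^ (1/p) * l ^ (1/q) :=
      mul_pos (Real.rpow_pos_of_pos hβ _) (Real.rpow_pos_of_pos hl.1 _)
    have hKC : IsCompact ((α ^ (1/p) * (1 - l) ^ (1/q)) • K) := hKcomp.smul _
    have hLC : IsCompact ((β ^ (1/p) * l ^ (1/q)) • L) := hLcomp.smul _
    apply mem_of_suppFn (hKC.add hLC)
      ((hKconv.smul _).add (hLconv.smul _))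
      ⟨_, Set.add_mem_add (Set.smul_mem_smul_set (interior_subset hK0))
        (Set.smul_mem_smul_set (interior_subset hL0))⟩
    intro w hw
    have hKw : 0 < suppFn K w := suppFn_pos hKcomp hK0 hw
    have hLw : 0 < suppFn L w := suppFn_pos hLcomp hL0 hw
    have hC : suppFn ((α ^ (1/p) * (1 - l) ^ (1/q)) • K + (β ^ (1/p) * l ^ (1/q)) • L) w
        = (α ^ (1/p) * (1 - l) ^ (1/q)) * suppFn K w
          + (β ^ (1/p) * l ^ (1/q)) * suppFn L w := by
      rw [suppFn_add hKC hLC (hKne.smul_set) (hLne.smul_set),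
        suppFn_smul hKcomp ha.le, suppFn_smul hLcomp hb.le]
    rw [hC]
    calc ⟪x, w⟫ ≤ (α * suppFn K w ^ p + β * suppFn L w ^ p) ^ (1/p) := hx w hw
      _ ≤ _ := by
          have := algIneq hp0 hp1 hpq hα hβ hKw hLw hl
          linarith [this]
end

section
/- Let 0 < p < 1 with 1/p + 1/q = 1 (so q < 0), let s > 0, let t ∈ (0,1), and let A, B ⊆ ℝ^n be nonempty Borel sets each containing the origin in its interior. Then the L_{p,s} inf-sup-convolution of the characteristic functions χ_A and χ_B with weights (1−t, t) equals the characteristic function of the L_p combination (1−t) ·_p A +_p t ·_p B; that is, for every z ∈ ℝ^n, inf_{λ∈(0,1)} sup_{z = C_{p,λ,t} x + D_{p,λ,t} y} M_s^{(C_{p,λ,t}, D_{p,λ,t})}(χ_A(x), χ_B(y)) = χ_{(1−t)·_p A +_p t·_p B}(z). -/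
open Set
open scoped Pointwise Classical

noncomputable def Ms (s a b u v : ℝ) : ℝ :=
  if 0 < u * v then
    (if s = 0 then u ^ a * v ^ b else (a * u ^ s + b * v ^ s) ^ (1 / s))
  else 0

lemma Ms_ind {α : Type*} (s C D : ℝ) (hs : s ≠ 0) (A B : Set α) (x y : α) :
    Ms s C D (A.indicator 1 x) (B.indicator 1 y)
      = if x ∈ A ∧ y ∈ B then (C + D) ^ (1 / s) else 0 := by
  by_cases hx : x ∈ A <;> by_cases hy : y ∈ B <;>
    simp [Ms, indicator_apply, hx, hy, hs, Real.one_rpow]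

lemma sup_eq {n : ℕ} {C D : ℝ} (hC : 0 < C) (hD : 0 < D) {s : ℝ} (hs : 0 < s)
    (A B : Set (Fin n → ℝ)) (z : Fin n → ℝ) :
    sSup {m : ℝ | ∃ x y : Fin n → ℝ, z = C • x + D • y ∧
        m = Ms s C D (A.indicator 1 x) (B.indicator 1 y)}
      = if z ∈ C • A + D • B then (C + D) ^ (1 / s) else 0 := by
  set S := {m : ℝ | ∃ x y : Fin n → ℝ, z = C • x + D • y ∧
      m = Ms s C D (A.indicator 1 x) (B.indicator 1 y)} with hS
  have hSne : S.Nonempty := by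
    refine ⟨_, C⁻¹ • z, 0, ?_, rfl⟩
    rw [smul_smul, mul_inv_cancel₀ hC.ne', one_smul, smul_zero, add_zero]
  have hub : ∀ m ∈ S, m ≤ (C + D) ^ (1 / s) := by
    rintro m ⟨x, y, hxy, rfl⟩
    rw [Ms_ind s C D hs.ne' A B x y]
    split_ifs
    · exact le_rfl
    · exact Real.rpow_nonneg (by positivity) _
  have hbdd : BddAbove S := ⟨_, hub⟩
  by_cases hz : z ∈ C • A + D • B
  · obtain ⟨x', hx', y', hy', hxy⟩ := hz
    obtain ⟨a, ha, rfl⟩ := hx'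
    obtain ⟨b, hb, rfl⟩ := hy'
    have hmem : (C + D) ^ (1 / s) ∈ S := by
      refine ⟨a, b, hxy.symm, ?_⟩
      rw [Ms_ind s C D hs.ne' A B a b, if_pos ⟨ha, hb⟩]
    rw [if_pos ⟨C • a, smul_mem_smul_set ha, D • b, smul_mem_smul_set hb, hxy⟩]
    exact le_antisymm (csSup_le hSne hub) (le_csSup hbdd hmem)
  · rw [if_neg hz]
    have hzero : ∀ m ∈ S, m = 0 := by
      rintro m ⟨x, y, hxy, rfl⟩
      rw [Ms_ind s C D hs.ne' A B x y, if_neg]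
      rintro ⟨hx, hy⟩
      exact hz ⟨C • x, smul_mem_smul_set hx, D • y, smul_mem_smul_set hy, hxy.symm⟩
    have : S = {0} := by
      apply Subset.antisymm
      · intro m hm; exact hzero m hm
      · obtain ⟨m, hm⟩ := hSne
        intro x hx
        rw [mem_singleton_iff] at hx
        rw [hx, ← hzero m hm]; exact hm
    rw [this, csSup_singleton]

lemma key (p q t l : ℝ) (hp0 : 0 < p) (hp1 : p < 1) (hpq : 1 / p + 1 / q = 1)
    (ht : t ∈ Ioo (0 : ℝ) 1) (hl : l ∈ Ioo (0 : ℝ) 1) :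
    1 ≤ (1 - t) ^ (1 / p) * (1 - l) ^ (1 / q) + t ^ (1 / p) * l ^ (1 / q) := by
  obtain ⟨ht0, ht1⟩ := ht
  obtain ⟨hl0, hl1⟩ := hl
  have ht1' : (0:ℝ) < 1 - t := by linarith
  have hl1' : (0:ℝ) < 1 - l := by linarith
  have hq : 1 / q = 1 - 1 / p := by linarith
  have hp' : (1:ℝ) ≤ 1 / p := by rw [le_div_iff₀ hp0]; linarith
  have hconv := (convexOn_rpow hp').2
    
    (x := (1 - t) / (1 - l)) (y := t / l)
    (mem_Ici.2 (by positivity)) (mem_Ici.2 (by positivity))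
    hl1'.le hl0.le (by ring)
  simp only [smul_eq_mul] at hconv
  have e1 : (1 - l) * ((1 - t) / (1 - l)) + l * (t / l) = 1 := by
    field_simp
    ring
  rw [e1, Real.one_rpow] at hconv
  have e2 : (1 - l) ^ (1 / q) = (1 - l) / (1 - l) ^ (1 / p) := by
    rw [hq, Real.rpow_sub hl1', Real.rpow_one]
  have e3 : l ^ (1 / q) = l / l ^ (1 / p) := by
    rw [hq, Real.rpow_sub hl0, Real.rpow_one]
  calc (1:ℝ) ≤ (1 - l) * ((1 - t) / (1 - l)) ^ (1 / p) + l * (t / l) ^ (1 / p) := hconv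
    _ = (1 - t) ^ (1 / p) * (1 - l) ^ (1 / q) + t ^ (1 / p) * l ^ (1 / q) := by
        rw [Real.div_rpow ht1'.le hl1'.le, Real.div_rpow ht0.le hl0.le, e2, e3]
        ring

/-- For `0 < p < 1`, `s > 0` and `t ∈ (0,1)`, the `L_{p,s}`
inf-sup-convolution of the characteristic functions of Borel sets `A, B` (each
containing the origin in its interior) with weights `(1−t, t)` is the characteristic
function of the `L_p` combination `(1−t)·_p A +_p t·_p B = ⋂_{λ∈(0,1)}
((1−t)^{1/p}(1−λ)^{1/q} A + t^{1/p}λ^{1/q} B)`. -/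
theorem stmt_6 {n : ℕ} (p q s t : ℝ) (hp0 : 0 < p) (hp1 : p < 1)
    (hpq : 1 / p + 1 / q = 1) (hs : 0 < s) (ht : t ∈ Ioo (0 : ℝ) 1)
    (A B : Set (Fin n → ℝ)) (hA : MeasurableSet A) (hB : MeasurableSet B)
    (hAne : A.Nonempty) (hBne : B.Nonempty)
    (hA0 : (0 : Fin n → ℝ) ∈ interior A) (hB0 : (0 : Fin n → ℝ) ∈ interior B)
    (z : Fin n → ℝ) :
    (⨅ l : Ioo (0 : ℝ) 1,
        sSup {m : ℝ | ∃ x y : Fin n → ℝ,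
          z = ((1 - t) ^ (1 / p) * (1 - (l : ℝ)) ^ (1 / q)) • x
                + (t ^ (1 / p) * (l : ℝ) ^ (1 / q)) • y ∧
          m = Ms s ((1 - t) ^ (1 / p) * (1 - (l : ℝ)) ^ (1 / q))
                (t ^ (1 / p) * (l : ℝ) ^ (1 / q))
                (A.indicator 1 x) (B.indicator 1 y)})
      = (⋂ l ∈ Ioo (0 : ℝ) 1,
          ((1 - t) ^ (1 / p) * (1 - l) ^ (1 / q)) • A
            + (t ^ (1 / p) * l ^ (1 / q)) • B).indicator 1 z := by
  obtain ⟨ht0, ht1⟩ := ht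
  have ht1' : (0:ℝ) < 1 - t := by linarith
  haveI : Nonempty (Ioo (0:ℝ) 1) := ⟨⟨t, ht0, ht1⟩⟩
  set F : Ioo (0 : ℝ) 1 → ℝ := fun l =>
    sSup {m : ℝ | ∃ x y : Fin n → ℝ,
      z = ((1 - t) ^ (1 / p) * (1 - (l : ℝ)) ^ (1 / q)) • x
            + (t ^ (1 / p) * (l : ℝ) ^ (1 / q)) • y ∧
      m = Ms s ((1 - t) ^ (1 / p) * (1 - (l : ℝ)) ^ (1 / q))
            (t ^ (1 / p) * (l : ℝ) ^ (1 / q))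
            (A.indicator 1 x) (B.indicator 1 y)} with hFdef
  have hCpos : ∀ l : Ioo (0 : ℝ) 1, 0 < (1 - t) ^ (1 / p) * (1 - (l : ℝ)) ^ (1 / q) := by
    intro l
    have h1 : (0:ℝ) < 1 - (l : ℝ) := by have := l.2.2; linarith
    positivity
  have hDpos : ∀ l : Ioo (0 : ℝ) 1, 0 < t ^ (1 / p) * (l : ℝ) ^ (1 / q) := by
    intro l
    have h1 : (0:ℝ) < (l : ℝ) := l.2.1
    positivity
  have hF : ∀ l : Ioo (0 : ℝ) 1, F l =
      if z ∈ ((1 - t) ^ (1 / p) * (1 - (l : ℝ)) ^ (1 / q)) • A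
          + (t ^ (1 / p) * (l : ℝ) ^ (1 / q)) • B
      then (((1 - t) ^ (1 / p) * (1 - (l : ℝ)) ^ (1 / q))
          + (t ^ (1 / p) * (l : ℝ) ^ (1 / q))) ^ (1 / s)
      else 0 := fun l => sup_eq (hCpos l) (hDpos l) hs A B z
  have hkey : ∀ l : Ioo (0 : ℝ) 1,
      1 ≤ ((1 - t) ^ (1 / p) * (1 - (l : ℝ)) ^ (1 / q))
          + (t ^ (1 / p) * (l : ℝ) ^ (1 / q)) :=
    fun l => key p q t l hp0 hp1 hpq ⟨ht0, ht1⟩ l.2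
  have hF0 : ∀ l : Ioo (0 : ℝ) 1, 0 ≤ F l := by
    intro l
    rw [hF l]
    split_ifs
    · exact Real.rpow_nonneg (by linarith [hkey l]) _
    · exact le_rfl
  have hbdd : BddBelow (Set.range F) := ⟨0, by rintro _ ⟨l, rfl⟩; exact hF0 l⟩
  by_cases hz : z ∈ ⋂ l ∈ Ioo (0 : ℝ) 1,
      ((1 - t) ^ (1 / p) * (1 - l) ^ (1 / q)) • A + (t ^ (1 / p) * l ^ (1 / q)) • B
  · rw [indicator_of_mem hz, Pi.one_apply]
    have hmem : ∀ l : Ioo (0 : ℝ) 1,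
        z ∈ ((1 - t) ^ (1 / p) * (1 - (l : ℝ)) ^ (1 / q)) • A
          + (t ^ (1 / p) * (l : ℝ) ^ (1 / q)) • B := by
      intro l
      exact mem_iInter₂.mp hz (l : ℝ) l.2
    apply le_antisymm
    · have hct : (1 - t) ^ (1 / p) * (1 - t) ^ (1 / q) = 1 - t := by
        rw [← Real.rpow_add ht1', hpq, Real.rpow_one]
      have hdt : t ^ (1 / p) * t ^ (1 / q) = t := by
        rw [← Real.rpow_add ht0, hpq, Real.rpow_one]
      have hFt : F ⟨t, ht0, ht1⟩ = 1 := by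
        rw [hF ⟨t, ht0, ht1⟩, if_pos (hmem ⟨t, ht0, ht1⟩)]
        simp only [hct, hdt]
        norm_num
      calc ⨅ l, F l ≤ F ⟨t, ht0, ht1⟩ := ciInf_le hbdd _
        _ = 1 := hFt
    · apply le_ciInf
      intro l
      rw [hF l, if_pos (hmem l)]
      calc (1:ℝ) = 1 ^ (1 / s) := (Real.one_rpow _).symm
        _ ≤ _ := Real.rpow_le_rpow zero_le_one (hkey l) (by positivity)
  · rw [indicator_of_notMem hz]
    simp only [mem_iInter₂, not_forall] at hz
    obtain ⟨l0, hl0, hzl0⟩ := hz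
    apply le_antisymm
    · have : F ⟨l0, hl0⟩ = 0 := by rw [hF ⟨l0, hl0⟩, if_neg hzl0]
      calc ⨅ l, F l ≤ F ⟨l0, hl0⟩ := ciInf_le hbdd _
        _ = 0 := this
    · exact le_ciInf hF0
end

section
/- Let p ≥ 1 with 1/p + 1/q = 1, let s ∈ ℝ, let j ∈ {0,…,n−1}, and let H be an (n−j)-dimensional linear subspace of ℝ^n. Then for all f, g ∈ F_s(ℝ^n), the projection of their L_{p,s} supremal-convolution equals the L_{p,s} supremal-convolution (computed in H) of their projections: P_H(f ⊕_{p,s} g) = (P_H f) ⊕_{p,s} (P_H g), where P_H f(z) = sup_{y ∈ H^⊥} f(z + y) for z ∈ H. -/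
open Set MeasureTheory

/-- The (unweighted) `L_{p,s}` supremal-convolution on a real vector space `V`:
`(f ⊕_{p,s} g)(z) = sup_{λ∈[0,1]} sup_{z = (1−λ)^{1/q} x + λ^{1/q} y}
  M_s^{((1−λ)^{1/q}, λ^{1/q})}(f(x), g(y))`, where `1/p + 1/q = 1`. -/
noncomputable def supConvPS {V : Type*} [AddCommGroup V] [Module ℝ V]
    (q s : ℝ) (f g : V → ℝ) (z : V) : ℝ :=
  ⨆ l : Icc (0 : ℝ) 1,
    sSup {m : ℝ | ∃ x y : V,
      z = ((1 - (l : ℝ)) ^ (1 / q)) • x + ((l : ℝ) ^ (1 / q)) • y ∧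
      m = Ms s ((1 - (l : ℝ)) ^ (1 / q)) ((l : ℝ) ^ (1 / q)) (f x) (g y)}

/-- `f ∈ F_s(ℝⁿ)`: a nonnegative, upper semicontinuous, integrable, `s`-concave
function with `f(0) = sup f > 0`. -/
def MemFs {n : ℕ} (s : ℝ) (f : EuclideanSpace ℝ (Fin n) → ℝ) : Prop :=
  (∀ x, 0 ≤ f x) ∧ UpperSemicontinuous f ∧ Integrable f ∧
    (∀ x, f x ≤ f 0) ∧ 0 < f 0 ∧
    (∀ x y : EuclideanSpace ℝ (Fin n), ∀ τ ∈ Icc (0 : ℝ) 1,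
      Ms s (1 - τ) τ (f x) (f y) ≤ f ((1 - τ) • x + τ • y))

/-- The projection of `f` onto a subspace `H`: `P_H f(z) = sup_{y ∈ H^⊥} f(z + y)`. -/
noncomputable def projF {n : ℕ} (H : Submodule ℝ (EuclideanSpace ℝ (Fin n)))
    (f : EuclideanSpace ℝ (Fin n) → ℝ) (z : H) : ℝ :=
  ⨆ y : Hᗮ, f ((z : EuclideanSpace ℝ (Fin n)) + (y : EuclideanSpace ℝ (Fin n)))

private lemma pos_pos_of_mul {u v : ℝ} (hu : 0 ≤ u) (hv : 0 ≤ v) (h : 0 < u * v) :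
    0 < u ∧ 0 < v := by
  refine ⟨hu.lt_of_ne' ?_, hv.lt_of_ne' ?_⟩ <;> rintro rfl <;> simp at h

private lemma Ms_nonneg {s a b u v : ℝ} (ha : 0 ≤ a) (hb : 0 ≤ b) (hu : 0 ≤ u) (hv : 0 ≤ v) :
    0 ≤ Ms s a b u v := by
  unfold Ms
  split_ifs with h hs
  · exact mul_nonneg (Real.rpow_nonneg hu a) (Real.rpow_nonneg hv b)
  · exact Real.rpow_nonneg (add_nonneg (mul_nonneg ha (Real.rpow_nonneg hu s))
      (mul_nonneg hb (Real.rpow_nonneg hv s))) _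
  · exact le_rfl

private lemma Ms_mono {s a b u v u' v' : ℝ} (ha : 0 ≤ a) (hb : 0 ≤ b) (hab : 1 ≤ a + b)
    (hu : 0 ≤ u) (hv : 0 ≤ v) (huu : u ≤ u') (hvv : v ≤ v') :
    Ms s a b u v ≤ Ms s a b u' v' := by
  by_cases h : 0 < u * v
  · obtain ⟨hu0, hv0⟩ := pos_pos_of_mul hu hv h
    have hu'0 : 0 < u' := hu0.trans_le huu
    have hv'0 : 0 < v' := hv0.trans_le hvv
    have h' : 0 < u' * v' := mul_pos hu'0 hv'0
    unfold Ms
    rw [if_pos h, if_pos h']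
    by_cases hs : s = 0
    · rw [if_pos hs, if_pos hs]
      exact mul_le_mul (Real.rpow_le_rpow hu0.le huu ha) (Real.rpow_le_rpow hv0.le hvv hb)
        (Real.rpow_nonneg hv0.le _) (Real.rpow_nonneg hu'0.le _)
    · rw [if_neg hs, if_neg hs]
      rcases lt_or_gt_of_ne hs with hneg | hpos
      · have h1 : 0 < u' ^ s := Real.rpow_pos_of_pos hu'0 s
        have h2 : 0 < v' ^ s := Real.rpow_pos_of_pos hv'0 s
        have hsum' : 0 < a * u' ^ s + b * v' ^ s := by
          rcases le_total (u' ^ s) (v' ^ s) with hm | hm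
          · nlinarith [mul_le_mul_of_nonneg_left hm hb, mul_le_mul_of_nonneg_right hab h1.le]
          · nlinarith [mul_le_mul_of_nonneg_left hm ha, mul_le_mul_of_nonneg_right hab h2.le]
        have e1 : u' ^ s ≤ u ^ s := Real.rpow_le_rpow_of_nonpos hu0 huu hneg.le
        have e2 : v' ^ s ≤ v ^ s := Real.rpow_le_rpow_of_nonpos hv0 hvv hneg.le
        have hle : a * u' ^ s + b * v' ^ s ≤ a * u ^ s + b * v ^ s := by
          nlinarith [mul_le_mul_of_nonneg_left e1 ha, mul_le_mul_of_nonneg_left e2 hb]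
        exact Real.rpow_le_rpow_of_nonpos hsum' hle
          (by rw [one_div]; exact inv_nonpos.mpr hneg.le)
      · apply Real.rpow_le_rpow
        · exact add_nonneg (mul_nonneg ha (Real.rpow_nonneg hu0.le s))
            (mul_nonneg hb (Real.rpow_nonneg hv0.le s))
        · have e1 : u ^ s ≤ u' ^ s := Real.rpow_le_rpow hu0.le huu hpos.le
          have e2 : v ^ s ≤ v' ^ s := Real.rpow_le_rpow hv0.le hvv hpos.le
          nlinarith [mul_le_mul_of_nonneg_left e1 ha, mul_le_mul_of_nonneg_left e2 hb]
        · positivity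
  · have h0 : Ms s a b u v = 0 := by unfold Ms; rw [if_neg h]
    rw [h0]
    exact Ms_nonneg ha hb (hu.trans huu) (hv.trans hvv)

private lemma Ms_le_bound {s a b u v F G : ℝ} (ha : 0 ≤ a) (ha1 : a ≤ 1) (hb : 0 ≤ b)
    (hb1 : b ≤ 1) (hab : 1 ≤ a + b) (hF : 1 ≤ F) (hG : 1 ≤ G)
    (hu : 0 ≤ u) (huF : u ≤ F) (hv : 0 ≤ v) (hvG : v ≤ G) :
    Ms s a b u v ≤ max 2 (2 ^ (1 / s)) * (F * G) := by
  have hFG1 : 1 ≤ F * G := le_trans hF (le_mul_of_one_le_right (by linarith) hG)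
  have h2max : (2:ℝ) ≤ max 2 (2 ^ (1 / s)) := le_max_left _ _
  have hCge : F * G ≤ max 2 (2 ^ (1 / s)) * (F * G) := by nlinarith
  have hC0 : (0:ℝ) ≤ max 2 (2 ^ (1 / s)) * (F * G) := by nlinarith
  unfold Ms
  split_ifs with h hs
  · have h1 : u ^ a ≤ F := by
      calc u ^ a ≤ F ^ a := Real.rpow_le_rpow hu huF ha
        _ ≤ F ^ (1:ℝ) := Real.rpow_le_rpow_of_exponent_le hF ha1
        _ = F := Real.rpow_one F
    have h2 : v ^ b ≤ G := by
      calc v ^ b ≤ G ^ b := Real.rpow_le_rpow hv hvG hb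
        _ ≤ G ^ (1:ℝ) := Real.rpow_le_rpow_of_exponent_le hG hb1
        _ = G := Real.rpow_one G
    calc u ^ a * v ^ b ≤ F * G :=
        mul_le_mul h1 h2 (Real.rpow_nonneg hv _) (by linarith)
      _ ≤ _ := hCge
  · obtain ⟨hu0, hv0⟩ := pos_pos_of_mul hu hv h
    have huFG : u ≤ F * G := huF.trans (le_mul_of_one_le_right (by linarith) hG)
    have hvFG : v ≤ F * G := hvG.trans (le_mul_of_one_le_left (by linarith) hF)
    have hFG0 : (0:ℝ) < F * G := by linarith
    rcases lt_or_gt_of_ne hs with hneg | hpos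
    · have e1 : (F * G) ^ s ≤ u ^ s := Real.rpow_le_rpow_of_nonpos hu0 huFG hneg.le
      have e2 : (F * G) ^ s ≤ v ^ s := Real.rpow_le_rpow_of_nonpos hv0 hvFG hneg.le
      have hFGs : 0 < (F * G) ^ s := Real.rpow_pos_of_pos hFG0 s
      have hsum : (F * G) ^ s ≤ a * u ^ s + b * v ^ s := by
        nlinarith [mul_le_mul_of_nonneg_left e1 ha, mul_le_mul_of_nonneg_left e2 hb,
          mul_le_mul_of_nonneg_right hab hFGs.le]
      calc (a * u ^ s + b * v ^ s) ^ (1 / s) ≤ ((F * G) ^ s) ^ (1 / s) :=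
          Real.rpow_le_rpow_of_nonpos hFGs hsum
            (by rw [one_div]; exact inv_nonpos.mpr hneg.le)
        _ = F * G := by
          rw [← Real.rpow_mul hFG0.le, mul_one_div_cancel hs, Real.rpow_one]
        _ ≤ _ := hCge
    · have e1 : u ^ s ≤ (F * G) ^ s := Real.rpow_le_rpow hu0.le huFG hpos.le
      have e2 : v ^ s ≤ (F * G) ^ s := Real.rpow_le_rpow hv0.le hvFG hpos.le
      have hFGs : 0 ≤ (F * G) ^ s := Real.rpow_nonneg hFG0.le s
      have hsum : a * u ^ s + b * v ^ s ≤ 2 * (F * G) ^ s := by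
        nlinarith [mul_le_mul_of_nonneg_left e1 ha, mul_le_mul_of_nonneg_left e2 hb,
          mul_le_mul_of_nonneg_right ha1 hFGs, mul_le_mul_of_nonneg_right hb1 hFGs]
      have hsum0 : 0 ≤ a * u ^ s + b * v ^ s :=
        add_nonneg (mul_nonneg ha (Real.rpow_nonneg hu0.le s))
          (mul_nonneg hb (Real.rpow_nonneg hv0.le s))
      calc (a * u ^ s + b * v ^ s) ^ (1 / s) ≤ (2 * (F * G) ^ s) ^ (1 / s) :=
          Real.rpow_le_rpow hsum0 hsum (by positivity)
        _ = 2 ^ (1 / s) * ((F * G) ^ s) ^ (1 / s) := Real.mul_rpow (by norm_num) hFGs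
        _ = 2 ^ (1 / s) * (F * G) := by
          rw [← Real.rpow_mul hFG0.le, mul_one_div_cancel hs, Real.rpow_one]
        _ ≤ _ := mul_le_mul_of_nonneg_right (le_max_right _ _) (by linarith)
  · exact hC0

private lemma Ms_scale {s a b u v t : ℝ} (ha : 0 ≤ a) (ha1 : a ≤ 1) (hb : 0 ≤ b) (hb1 : b ≤ 1)
    (ht0 : 0 < t) (ht1 : t ≤ 1) (hu : 0 < u) (hv : 0 < v) :
    t ^ 2 * Ms s a b u v ≤ Ms s a b (t * u) (t * v) := by
  have huv : 0 < u * v := mul_pos hu hv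
  have huv' : 0 < t * u * (t * v) := by positivity
  unfold Ms
  rw [if_pos huv, if_pos huv']
  by_cases hs : s = 0
  · rw [if_pos hs, if_pos hs, Real.mul_rpow ht0.le hu.le, Real.mul_rpow ht0.le hv.le]
    have h1 : t ^ 2 ≤ t ^ a * t ^ b := by
      rw [← Real.rpow_add ht0, ← Real.rpow_natCast t 2]
      exact Real.rpow_le_rpow_of_exponent_ge ht0 ht1 (by push_cast; linarith)
    have h2 : 0 ≤ u ^ a * v ^ b :=
      mul_nonneg (Real.rpow_nonneg hu.le _) (Real.rpow_nonneg hv.le _)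
    calc t ^ 2 * (u ^ a * v ^ b) ≤ t ^ a * t ^ b * (u ^ a * v ^ b) :=
        mul_le_mul_of_nonneg_right h1 h2
      _ = t ^ a * u ^ a * (t ^ b * v ^ b) := by ring
  · rw [if_neg hs, if_neg hs]
    have key : a * (t * u) ^ s + b * (t * v) ^ s = t ^ s * (a * u ^ s + b * v ^ s) := by
      rw [Real.mul_rpow ht0.le hu.le, Real.mul_rpow ht0.le hv.le]; ring
    have hsum0 : 0 ≤ a * u ^ s + b * v ^ s :=
      add_nonneg (mul_nonneg ha (Real.rpow_nonneg hu.le s))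
        (mul_nonneg hb (Real.rpow_nonneg hv.le s))
    rw [key, Real.mul_rpow (Real.rpow_nonneg ht0.le s) hsum0]
    have hts : (t ^ s) ^ (1 / s) = t := by
      rw [← Real.rpow_mul ht0.le, mul_one_div_cancel hs, Real.rpow_one]
    rw [hts]
    have hM : 0 ≤ (a * u ^ s + b * v ^ s) ^ (1 / s) := Real.rpow_nonneg hsum0 _
    nlinarith [mul_nonneg hM (mul_nonneg ht0.le (sub_nonneg.mpr ht1))]

private lemma exists_decomp {V : Type*} [AddCommGroup V] [Module ℝ V] {a b : ℝ}
    (hab : 1 ≤ a + b) (w : V) : ∃ x y : V, w = a • x + b • y := by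
  by_cases ha : a = 0
  · have hb : b ≠ 0 := by intro hb; rw [ha, hb] at hab; norm_num at hab
    exact ⟨0, b⁻¹ • w, by rw [smul_zero, zero_add, smul_smul, mul_inv_cancel₀ hb, one_smul]⟩
  · exact ⟨a⁻¹ • w, 0, by rw [smul_zero, add_zero, smul_smul, mul_inv_cancel₀ ha, one_smul]⟩

private noncomputable def Aset (q s : ℝ) {V : Type*} [AddCommGroup V] [Module ℝ V]
    (f g : V → ℝ) (l : ℝ) (w : V) : Set ℝ :=
  {m : ℝ | ∃ x y : V, w = ((1 - l) ^ (1 / q)) • x + (l ^ (1 / q)) • y ∧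
      m = Ms s ((1 - l) ^ (1 / q)) (l ^ (1 / q)) (f x) (g y)}

private lemma projF_def {n : ℕ} (H : Submodule ℝ (EuclideanSpace ℝ (Fin n)))
    (f : EuclideanSpace ℝ (Fin n) → ℝ) (z : H) :
    projF H f z = ⨆ y : Hᗮ,
      f ((z : EuclideanSpace ℝ (Fin n)) + (y : EuclideanSpace ℝ (Fin n))) := rfl

private lemma lt_projF_exists {n : ℕ} {H : Submodule ℝ (EuclideanSpace ℝ (Fin n))}
    {f : EuclideanSpace ℝ (Fin n) → ℝ} {x : H} {c : ℝ} (h : c < projF H f x) :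
    ∃ w : Hᗮ, c < f ((x : EuclideanSpace ℝ (Fin n)) + (w : EuclideanSpace ℝ (Fin n))) := by
  have : Nonempty Hᗮ := ⟨0⟩
  rw [projF_def] at h
  exact exists_lt_of_lt_ciSup h

private lemma supConvPS_eq (q s : ℝ) {V : Type*} [AddCommGroup V] [Module ℝ V]
    (f g : V → ℝ) (z : V) :
    supConvPS q s f g z = ⨆ l : Icc (0:ℝ) 1, sSup (Aset q s f g (l : ℝ) z) := rfl

/-- For `p ≥ 1`, `s ∈ ℝ`, `j ∈ {0,…,n−1}` and an
`(n−j)`-dimensional subspace `H` of `ℝⁿ`, the projection of the `L_{p,s}`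
supremal-convolution of `f, g ∈ F_s(ℝⁿ)` equals the `L_{p,s}` supremal-convolution,
computed in `H`, of their projections. -/
theorem stmt_18 {n : ℕ} (p q s : ℝ) (hp : 1 ≤ p) (hpq : 1 / p + 1 / q = 1)
    (j : ℕ) (hj : j < n) (H : Submodule ℝ (EuclideanSpace ℝ (Fin n)))
    (hH : Module.finrank ℝ H = n - j)
    (f g : EuclideanSpace ℝ (Fin n) → ℝ) (hf : MemFs s f) (hg : MemFs s g) :
    projF H (supConvPS q s f g) = supConvPS q s (projF H f) (projF H g) := by
  classical
  obtain ⟨hf0, -, -, hfle, hfpos, -⟩ := hf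
  obtain ⟨hg0, -, -, hgle, hgpos, -⟩ := hg
  have hp0 : 0 < p := lt_of_lt_of_le one_pos hp
  have hinvp0 : 0 < 1 / p := by positivity
  have hinvp1 : 1 / p ≤ 1 := by rw [div_le_one hp0]; exact hp
  have hq0 : 0 ≤ 1 / q := by linarith
  have hq1 : 1 / q ≤ 1 := by linarith
  haveI : Nonempty (Icc (0:ℝ) 1) := ⟨⟨0, le_rfl, zero_le_one⟩⟩
  haveI : Nonempty Hᗮ := ⟨0⟩
  set F := max (f 0) 1 with hFdef
  set G := max (g 0) 1 with hGdef
  set C := max 2 (2 ^ (1 / s)) * (F * G) with hCdef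
  have hF1 : 1 ≤ F := le_max_right _ _
  have hG1 : 1 ≤ G := le_max_right _ _
  have hfF : ∀ x, f x ≤ F := fun x => (hfle x).trans (le_max_left _ _)
  have hgG : ∀ x, g x ≤ G := fun x => (hgle x).trans (le_max_left _ _)
  have h2max : (2:ℝ) ≤ max 2 (2 ^ (1 / s)) := le_max_left _ _
  have hFG0 : (0:ℝ) ≤ F * G := mul_nonneg (by linarith) (by linarith)
  have hC0 : 0 ≤ C := by rw [hCdef]; exact mul_nonneg (by linarith) hFG0
  have wa : ∀ l : Icc (0:ℝ) 1, 0 ≤ (1 - (l:ℝ)) ^ (1 / q) :=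
    fun l => Real.rpow_nonneg (by linarith [l.2.2]) _
  have wb : ∀ l : Icc (0:ℝ) 1, 0 ≤ ((l:ℝ)) ^ (1 / q) :=
    fun l => Real.rpow_nonneg l.2.1 _
  have wa1 : ∀ l : Icc (0:ℝ) 1, (1 - (l:ℝ)) ^ (1 / q) ≤ 1 :=
    fun l => Real.rpow_le_one (by linarith [l.2.2]) (by linarith [l.2.1]) hq0
  have wb1 : ∀ l : Icc (0:ℝ) 1, ((l:ℝ)) ^ (1 / q) ≤ 1 :=
    fun l => Real.rpow_le_one l.2.1 l.2.2 hq0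
  have hpow_ge : ∀ t : ℝ, 0 ≤ t → t ≤ 1 → t ≤ t ^ (1 / q) := by
    intro t ht0 ht1
    rcases eq_or_lt_of_le ht0 with h | h
    · rw [← h]; exact Real.rpow_nonneg le_rfl _
    · calc t = t ^ (1:ℝ) := (Real.rpow_one t).symm
        _ ≤ t ^ (1 / q) := Real.rpow_le_rpow_of_exponent_ge h ht1 hq1
  have wab : ∀ l : Icc (0:ℝ) 1, 1 ≤ (1 - (l:ℝ)) ^ (1 / q) + ((l:ℝ)) ^ (1 / q) := by
    intro l
    have h1 := hpow_ge (1 - (l:ℝ)) (by linarith [l.2.2]) (by linarith [l.2.1])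
    have h2 := hpow_ge (l:ℝ) l.2.1 l.2.2
    linarith
  -- projections of f and g
  have hbddf : ∀ x : H, BddAbove (Set.range fun y : Hᗮ =>
      f ((x : EuclideanSpace ℝ (Fin n)) + (y : EuclideanSpace ℝ (Fin n)))) :=
    fun x => ⟨F, by rintro _ ⟨y, rfl⟩; exact hfF _⟩
  have hbddg : ∀ x : H, BddAbove (Set.range fun y : Hᗮ =>
      g ((x : EuclideanSpace ℝ (Fin n)) + (y : EuclideanSpace ℝ (Fin n)))) :=
    fun x => ⟨G, by rintro _ ⟨y, rfl⟩; exact hgG _⟩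
  have hPf0 : ∀ x : H, 0 ≤ projF H f x :=
    fun x => le_trans (hf0 _) (le_ciSup (hbddf x) (0 : Hᗮ))
  have hPg0 : ∀ x : H, 0 ≤ projF H g x :=
    fun x => le_trans (hg0 _) (le_ciSup (hbddg x) (0 : Hᗮ))
  have hPfF : ∀ x : H, projF H f x ≤ F := fun x => ciSup_le fun y => hfF _
  have hPgG : ∀ x : H, projF H g x ≤ G := fun x => ciSup_le fun y => hgG _
  -- facts about the A sets (ambient space)
  have hAelem : ∀ (l : Icc (0:ℝ) 1) (w : EuclideanSpace ℝ (Fin n)) (m : ℝ),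
      m ∈ Aset q s f g (l:ℝ) w → 0 ≤ m ∧ m ≤ C := by
    rintro l w m ⟨x, y, -, rfl⟩
    exact ⟨Ms_nonneg (wa l) (wb l) (hf0 x) (hg0 y),
      Ms_le_bound (wa l) (wa1 l) (wb l) (wb1 l) (wab l) hF1 hG1 (hf0 x) (hfF x) (hg0 y) (hgG y)⟩
  have hAbdd : ∀ (l : Icc (0:ℝ) 1) (w : EuclideanSpace ℝ (Fin n)),
      BddAbove (Aset q s f g (l:ℝ) w) :=
    fun l w => ⟨C, fun m hm => (hAelem l w m hm).2⟩
  have hAne : ∀ (l : Icc (0:ℝ) 1) (w : EuclideanSpace ℝ (Fin n)),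
      (Aset q s f g (l:ℝ) w).Nonempty := by
    intro l w
    obtain ⟨x, y, hxy⟩ := exists_decomp (wab l) w
    exact ⟨_, x, y, hxy, rfl⟩
  have hsA0 : ∀ (l : Icc (0:ℝ) 1) (w : EuclideanSpace ℝ (Fin n)),
      0 ≤ sSup (Aset q s f g (l:ℝ) w) := by
    intro l w
    obtain ⟨m, hm⟩ := hAne l w
    exact le_trans (hAelem l w m hm).1 (le_csSup (hAbdd l w) hm)
  have hsAC : ∀ (l : Icc (0:ℝ) 1) (w : EuclideanSpace ℝ (Fin n)),
      sSup (Aset q s f g (l:ℝ) w) ≤ C :=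
    fun l w => Real.sSup_le (fun m hm => (hAelem l w m hm).2) hC0
  have hS_le : ∀ w, supConvPS q s f g w ≤ C := by
    intro w; rw [supConvPS_eq]; exact ciSup_le fun l => hsAC l w
  have hSrbdd : ∀ w, BddAbove (Set.range fun l : Icc (0:ℝ) 1 =>
      sSup (Aset q s f g (l:ℝ) w)) :=
    fun w => ⟨C, by rintro _ ⟨l, rfl⟩; exact hsAC l w⟩
  have hS0 : ∀ w, 0 ≤ supConvPS q s f g w := by
    intro w; rw [supConvPS_eq]
    exact le_trans (hsA0 ⟨0, le_rfl, zero_le_one⟩ w)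
      (le_ciSup (hSrbdd w) ⟨0, le_rfl, zero_le_one⟩)
  -- facts about the B sets (subspace)
  have hBelem : ∀ (l : Icc (0:ℝ) 1) (w : H) (m : ℝ),
      m ∈ Aset q s (projF H f) (projF H g) (l:ℝ) w → 0 ≤ m ∧ m ≤ C := by
    rintro l w m ⟨x, y, -, rfl⟩
    exact ⟨Ms_nonneg (wa l) (wb l) (hPf0 x) (hPg0 y),
      Ms_le_bound (wa l) (wa1 l) (wb l) (wb1 l) (wab l) hF1 hG1 (hPf0 x) (hPfF x)
        (hPg0 y) (hPgG y)⟩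
  have hBbdd : ∀ (l : Icc (0:ℝ) 1) (w : H),
      BddAbove (Aset q s (projF H f) (projF H g) (l:ℝ) w) :=
    fun l w => ⟨C, fun m hm => (hBelem l w m hm).2⟩
  have hBne : ∀ (l : Icc (0:ℝ) 1) (w : H),
      (Aset q s (projF H f) (projF H g) (l:ℝ) w).Nonempty := by
    intro l w
    obtain ⟨x, y, hxy⟩ := exists_decomp (wab l) w
    exact ⟨_, x, y, hxy, rfl⟩
  have hsB0 : ∀ (l : Icc (0:ℝ) 1) (w : H),
      0 ≤ sSup (Aset q s (projF H f) (projF H g) (l:ℝ) w) := by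
    intro l w
    obtain ⟨m, hm⟩ := hBne l w
    exact le_trans (hBelem l w m hm).1 (le_csSup (hBbdd l w) hm)
  have hsBC : ∀ (l : Icc (0:ℝ) 1) (w : H),
      sSup (Aset q s (projF H f) (projF H g) (l:ℝ) w) ≤ C :=
    fun l w => Real.sSup_le (fun m hm => (hBelem l w m hm).2) hC0
  funext z
  have hLbdd : BddAbove (Set.range fun y : Hᗮ =>
      supConvPS q s f g ((z : EuclideanSpace ℝ (Fin n)) + (y : EuclideanSpace ℝ (Fin n)))) :=
    ⟨C, by rintro _ ⟨y, rfl⟩; exact hS_le _⟩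
  have hL0 : 0 ≤ projF H (supConvPS q s f g) z :=
    le_trans (hS0 _) (le_ciSup hLbdd (0 : Hᗮ))
  apply le_antisymm
  · -- LHS ≤ RHS
    show (⨆ y : Hᗮ, supConvPS q s f g
        ((z : EuclideanSpace ℝ (Fin n)) + (y : EuclideanSpace ℝ (Fin n))))
      ≤ supConvPS q s (projF H f) (projF H g) z
    rw [supConvPS_eq]
    have hBrbdd : BddAbove (Set.range fun l : Icc (0:ℝ) 1 =>
        sSup (Aset q s (projF H f) (projF H g) (l:ℝ) z)) :=
      ⟨C, by rintro _ ⟨l, rfl⟩; exact hsBC l z⟩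
    refine ciSup_le fun y => ?_
    rw [supConvPS_eq]
    refine ciSup_le fun l => ?_
    refine le_trans ?_ (le_ciSup hBrbdd l)
    refine Real.sSup_le ?_ (hsB0 l z)
    rintro m ⟨x', y', hw, rfl⟩
    have hz2 : (z : H) = ((1 - (l:ℝ)) ^ (1 / q)) • (H.orthogonalProjectionOnto x')
        + ((l:ℝ) ^ (1 / q)) • (H.orthogonalProjectionOnto y') := by
      have h1 := congrArg (H.orthogonalProjectionOnto) hw
      simp only [map_add, _root_.map_smul, Submodule.orthogonalProjectionOnto_mem_subspace_eq_self,
        Submodule.orthogonalProjectionOnto_apply_of_mem_orthogonal y.2, add_zero] at h1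
      exact h1
    have hfle' : f x' ≤ projF H f (H.orthogonalProjectionOnto x') := by
      have hmem : x' - (H.orthogonalProjectionOnto x' : EuclideanSpace ℝ (Fin n)) ∈ Hᗮ :=
        Submodule.sub_starProjection_mem_orthogonal x'
      have h2 := le_ciSup (hbddf (H.orthogonalProjectionOnto x')) (⟨_, hmem⟩ : Hᗮ)
      have e : ((H.orthogonalProjectionOnto x' : EuclideanSpace ℝ (Fin n)))
          + (x' - (H.orthogonalProjectionOnto x' : EuclideanSpace ℝ (Fin n))) = x' := by abel
      rw [e] at h2
      exact h2
    have hgle' : g y' ≤ projF H g (H.orthogonalProjectionOnto y') := by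
      have hmem : y' - (H.orthogonalProjectionOnto y' : EuclideanSpace ℝ (Fin n)) ∈ Hᗮ :=
        Submodule.sub_starProjection_mem_orthogonal y'
      have h2 := le_ciSup (hbddg (H.orthogonalProjectionOnto y')) (⟨_, hmem⟩ : Hᗮ)
      have e : ((H.orthogonalProjectionOnto y' : EuclideanSpace ℝ (Fin n)))
          + (y' - (H.orthogonalProjectionOnto y' : EuclideanSpace ℝ (Fin n))) = y' := by abel
      rw [e] at h2
      exact h2
    calc Ms s ((1 - (l:ℝ)) ^ (1 / q)) ((l:ℝ) ^ (1 / q)) (f x') (g y')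
        ≤ Ms s ((1 - (l:ℝ)) ^ (1 / q)) ((l:ℝ) ^ (1 / q))
            (projF H f (H.orthogonalProjectionOnto x')) (projF H g (H.orthogonalProjectionOnto y')) :=
          Ms_mono (wa l) (wb l) (wab l) (hf0 x') (hg0 y') hfle' hgle'
      _ ≤ sSup (Aset q s (projF H f) (projF H g) (l:ℝ) z) :=
          le_csSup (hBbdd l z) ⟨_, _, hz2, rfl⟩
  · -- RHS ≤ LHS
    rw [supConvPS_eq, projF_def]
    have hL0' : 0 ≤ ⨆ yy : Hᗮ, supConvPS q s f g
        ((z : EuclideanSpace ℝ (Fin n)) + (yy : EuclideanSpace ℝ (Fin n))) :=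
      le_trans (hS0 _) (le_ciSup hLbdd (0 : Hᗮ))
    refine ciSup_le fun l => ?_
    refine Real.sSup_le ?_ hL0'
    rintro m ⟨x, y, hzxy, rfl⟩
    obtain ⟨U, hUdef⟩ : ∃ U, projF H f x = U := ⟨_, rfl⟩
    obtain ⟨V, hVdef⟩ : ∃ V, projF H g y = V := ⟨_, rfl⟩
    rw [hUdef, hVdef]
    by_cases hUV : 0 < U * V
    case neg =>
      have h0 : Ms s ((1 - (l:ℝ)) ^ (1 / q)) ((l:ℝ) ^ (1 / q)) U V = 0 := by
        unfold Ms; rw [if_neg hUV]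
      rw [h0]; exact hL0'
    have hU0 : 0 < U := (pos_pos_of_mul (hUdef ▸ hPf0 x) (hVdef ▸ hPg0 y) hUV).1
    have hV0 : 0 < V := (pos_pos_of_mul (hUdef ▸ hPf0 x) (hVdef ▸ hPg0 y) hUV).2
    set M := Ms s ((1 - (l:ℝ)) ^ (1 / q)) ((l:ℝ) ^ (1 / q)) U V with hMdef
    refine le_of_forall_lt fun r hr => ?_
    rcases lt_or_ge r 0 with hr0 | hr0
    · exact lt_of_lt_of_le hr0 hL0'
    have hM0 : 0 < M := lt_of_le_of_lt hr0 hr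
    set t := Real.sqrt ((r / M + 1) / 2) with htdef
    have hrM1 : r / M < 1 := (div_lt_one hM0).mpr hr
    have hrM0 : 0 ≤ r / M := div_nonneg hr0 hM0.le
    have ht2 : t ^ 2 = (r / M + 1) / 2 := Real.sq_sqrt (by linarith)
    have ht0 : 0 < t := Real.sqrt_pos.mpr (by linarith)
    have ht1 : t < 1 := by
      have h := Real.sqrt_lt_sqrt (by linarith : (0:ℝ) ≤ (r / M + 1) / 2)
        (by linarith : (r / M + 1) / 2 < 1)
      rwa [Real.sqrt_one] at h
    have hrt : r < t ^ 2 * M := by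
      have he : t ^ 2 * M = (r + M) / 2 := by
        rw [ht2]; field_simp
      rw [he]; linarith
    have hU' : t * U < projF H f x := by
      rw [hUdef]; exact mul_lt_of_lt_one_left hU0 ht1
    have hV' : t * V < projF H g y := by
      rw [hVdef]; exact mul_lt_of_lt_one_left hV0 ht1
    obtain ⟨w1, hw1⟩ := lt_projF_exists hU'
    obtain ⟨w2, hw2⟩ := lt_projF_exists hV'
    set aw : Hᗮ := ((1 - (l:ℝ)) ^ (1 / q)) • w1 + ((l:ℝ) ^ (1 / q)) • w2 with hawdef
    have hz' : (z : EuclideanSpace ℝ (Fin n)) + (aw : EuclideanSpace ℝ (Fin n))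
        = ((1 - (l:ℝ)) ^ (1 / q)) • ((x : EuclideanSpace ℝ (Fin n)) + (w1 : EuclideanSpace ℝ (Fin n)))
          + ((l:ℝ) ^ (1 / q)) • ((y : EuclideanSpace ℝ (Fin n)) + (w2 : EuclideanSpace ℝ (Fin n))) := by
      have hzc := congrArg (fun v : H => (v : EuclideanSpace ℝ (Fin n))) hzxy
      simp only [Submodule.coe_add, Submodule.coe_smul] at hzc
      rw [hawdef]
      simp only [Submodule.coe_add, Submodule.coe_smul]
      rw [hzc, smul_add, smul_add]
      abel
    have hmem : Ms s ((1 - (l:ℝ)) ^ (1 / q)) ((l:ℝ) ^ (1 / q))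
        (f ((x : EuclideanSpace ℝ (Fin n)) + (w1 : EuclideanSpace ℝ (Fin n))))
        (g ((y : EuclideanSpace ℝ (Fin n)) + (w2 : EuclideanSpace ℝ (Fin n))))
        ∈ Aset q s f g (l:ℝ)
          ((z : EuclideanSpace ℝ (Fin n)) + (aw : EuclideanSpace ℝ (Fin n))) :=
      ⟨_, _, hz', rfl⟩
    have hlow : t ^ 2 * M ≤ Ms s ((1 - (l:ℝ)) ^ (1 / q)) ((l:ℝ) ^ (1 / q))
        (f ((x : EuclideanSpace ℝ (Fin n)) + (w1 : EuclideanSpace ℝ (Fin n))))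
        (g ((y : EuclideanSpace ℝ (Fin n)) + (w2 : EuclideanSpace ℝ (Fin n)))) := by
      have st1 : t ^ 2 * M ≤ Ms s ((1 - (l:ℝ)) ^ (1 / q)) ((l:ℝ) ^ (1 / q)) (t * U) (t * V) := by
        rw [hMdef]
        exact Ms_scale (wa l) (wa1 l) (wb l) (wb1 l) ht0 ht1.le hU0 hV0
      exact le_trans st1 (Ms_mono (wa l) (wb l) (wab l) (mul_nonneg ht0.le hU0.le)
        (mul_nonneg ht0.le hV0.le) hw1.le hw2.le)
    have step1 : Ms s ((1 - (l:ℝ)) ^ (1 / q)) ((l:ℝ) ^ (1 / q))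
        (f ((x : EuclideanSpace ℝ (Fin n)) + (w1 : EuclideanSpace ℝ (Fin n))))
        (g ((y : EuclideanSpace ℝ (Fin n)) + (w2 : EuclideanSpace ℝ (Fin n))))
        ≤ sSup (Aset q s f g (l:ℝ)
            ((z : EuclideanSpace ℝ (Fin n)) + (aw : EuclideanSpace ℝ (Fin n)))) :=
      le_csSup (hAbdd l _) hmem
    have step2 : sSup (Aset q s f g (l:ℝ)
          ((z : EuclideanSpace ℝ (Fin n)) + (aw : EuclideanSpace ℝ (Fin n))))
        ≤ supConvPS q s f g
          ((z : EuclideanSpace ℝ (Fin n)) + (aw : EuclideanSpace ℝ (Fin n))) := by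
      rw [supConvPS_eq]
      exact le_ciSup (hSrbdd _) l
    have step3 : supConvPS q s f g
          ((z : EuclideanSpace ℝ (Fin n)) + (aw : EuclideanSpace ℝ (Fin n)))
        ≤ ⨆ yy : Hᗮ, supConvPS q s f g
          ((z : EuclideanSpace ℝ (Fin n)) + (yy : EuclideanSpace ℝ (Fin n))) :=
      le_ciSup hLbdd aw
    exact lt_of_lt_of_le hrt (le_trans hlow (le_trans step1 (le_trans step2 step3)))
end

section
/- Let p ≥ 1, let u, v ∈ C_s(ℝ^n), let α, β ≥ 0, and let H be a linear subspace of ℝ^n. Then the inf-projection onto H of the L_p addition of u and v equals the L_p addition (computed within H) of the inf-projections: [(α ⊠_p u) ⊞_p (β ⊠_p v)]_H = (α ⊠_p u_H) ⊞_p (β ⊠_p v_H). Here w_H(x) = inf_{y ∈ H^⊥} w(x + y) for x ∈ H, the L_p addition of convex base functions is defined by (α ⊠_p u) ⊞_p (β ⊠_p v) = [ (α (u*)^p + β (v*)^p)^{1/p} ]*, with all Legendre transforms on the left side taken in ℝ^n and those on the right side taken within H. -/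
open Set
open scoped RealInnerProductSpace

/-- `u` belongs to the class `C_s`: `u : V → [0,∞]` is convex, lower semicontinuous,
`u(0) = 0`, and `u(x)/‖x‖ → ∞` as `‖x‖ → ∞` (supercoercivity). -/
def MemCs {V : Type*} [NormedAddCommGroup V] [InnerProductSpace ℝ V]
    (u : V → EReal) : Prop :=
  (∀ x, (0 : EReal) ≤ u x) ∧ u 0 = 0 ∧ LowerSemicontinuous u ∧
  (∀ x y : V, ∀ τ : ℝ, τ ∈ Icc (0 : ℝ) 1 →
    u (τ • x + (1 - τ) • y) ≤ (τ : EReal) * u x + ((1 - τ : ℝ) : EReal) * u y) ∧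
  (∀ M : ℝ, ∃ R : ℝ, ∀ x : V, R ≤ ‖x‖ → ((M * ‖x‖ : ℝ) : EReal) ≤ u x)

/-- The Legendre transform `u*(x) = sup_y (⟨x,y⟫ − u(y))` of an extended-real-valued
function `u`; for `u ∈ C_s` the supremum is finite and nonnegative, and we record
its real value. -/
noncomputable def legT {V : Type*} [NormedAddCommGroup V] [InnerProductSpace ℝ V]
    (u : V → EReal) (x : V) : ℝ :=
  (⨆ y : V, ((⟪x, y⟫ : ℝ) : EReal) - u y).toReal

/-- The Legendre transform of a real-valued function, with values in `[−∞,∞]`. -/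
noncomputable def legE {V : Type*} [NormedAddCommGroup V] [InnerProductSpace ℝ V]
    (w : V → ℝ) (x : V) : EReal :=
  ⨆ y : V, ((⟪x, y⟫ - w y : ℝ) : EReal)

/-- The `L_p` addition of convex base functions:
`(α ⊠_p u) ⊞_p (β ⊠_p v) = [(α (u*)^p + β (v*)^p)^{1/p}]*`. -/
noncomputable def lpAdd {V : Type*} [NormedAddCommGroup V] [InnerProductSpace ℝ V]
    (p α β : ℝ) (u v : V → EReal) : V → EReal :=
  legE fun y => (α * legT u y ^ p + β * legT v y ^ p) ^ (1 / p)

/-- The inf-projection of an extended-real-valued function onto a subspace `H`: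
`w_H(x) = inf_{y ∈ H^⊥} w(x + y)` for `x ∈ H`. -/
noncomputable def projB {n : ℕ} (H : Submodule ℝ (EuclideanSpace ℝ (Fin n)))
    (w : EuclideanSpace ℝ (Fin n) → EReal) (x : H) : EReal :=
  ⨅ y : Hᗮ, w ((x : EuclideanSpace ℝ (Fin n)) + (y : EuclideanSpace ℝ (Fin n)))

lemma ereal_sub_iInf {ι : Sort*} (c : ℝ) (f : ι → EReal) :
    (c : EReal) - ⨅ i, f i = ⨆ i, ((c : EReal) - f i) := by
  apply le_antisymm
  · rw [← EReal.le_of_forall_lt_iff_le]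
    intro z hz
    have h1 : ∀ i, ((c - z : ℝ) : EReal) ≤ f i := by
      intro i
      by_contra hlt
      push_neg at hlt
      have h2 : (z : EReal) ≤ (c : EReal) - f i := by
        have := EReal.sub_le_sub (le_refl (c : EReal)) hlt.le
        rwa [← EReal.coe_sub, sub_sub_cancel] at this
      exact absurd (h2.trans_lt ((le_iSup (fun i => (c : EReal) - f i) i).trans_lt hz)) (lt_irrefl _)
    have h3 : ((c - z : ℝ) : EReal) ≤ ⨅ i, f i := le_iInf h1
    calc (c : EReal) - ⨅ i, f i ≤ (c : EReal) - ((c - z : ℝ) : EReal) :=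
          EReal.sub_le_sub le_rfl h3
      _ = ((c - (c - z) : ℝ) : EReal) := by rw [← EReal.coe_sub]
      _ = (z : EReal) := by norm_num
  · exact iSup_le fun i => EReal.sub_le_sub le_rfl (iInf_le _ i)

variable {V : Type*} [NormedAddCommGroup V] [InnerProductSpace ℝ V] {u : V → EReal}

lemma legT_sup_nonneg (hu : MemCs u) (x : V) :
    (0 : EReal) ≤ ⨆ y : V, ((⟪x, y⟫ : ℝ) : EReal) - u y := by
  have h0 : ((⟪x, (0 : V)⟫ : ℝ) : EReal) - u 0 = 0 := by
    rw [inner_zero_right, hu.2.1]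
    simp
  calc (0 : EReal) = ((⟪x, (0 : V)⟫ : ℝ) : EReal) - u 0 := h0.symm
    _ ≤ _ := le_iSup (fun y => ((⟪x, y⟫ : ℝ) : EReal) - u y) 0

lemma legT_sup_ne_bot (hu : MemCs u) (x : V) :
    (⨆ y : V, ((⟪x, y⟫ : ℝ) : EReal) - u y) ≠ ⊥ :=
  fun h => by simpa [h] using legT_sup_nonneg hu x

lemma legT_sup_le (hu : MemCs u) (x : V) :
    ∃ B : ℝ, (⨆ y : V, ((⟪x, y⟫ : ℝ) : EReal) - u y) ≤ (B : EReal) := by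
  obtain ⟨R, hR⟩ := hu.2.2.2.2 (‖x‖ + 1)
  refine ⟨max (‖x‖ * max R 0) 0, iSup_le fun y => ?_⟩
  rcases le_or_gt R ‖y‖ with h | h
  · have h1 : ((⟪x, y⟫ : ℝ) : EReal) - u y
        ≤ ((⟪x, y⟫ : ℝ) : EReal) - (((‖x‖ + 1) * ‖y‖ : ℝ) : EReal) :=
      EReal.sub_le_sub le_rfl (hR y h)
    rw [← EReal.coe_sub] at h1
    refine h1.trans ?_
    rw [EReal.coe_le_coe_iff]
    have h2 : ⟪x, y⟫ - (‖x‖ + 1) * ‖y‖ ≤ ‖x‖ * ‖y‖ - (‖x‖ + 1) * ‖y‖ := by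
      have := real_inner_le_norm x y
      linarith
    have h3 : ‖x‖ * ‖y‖ - (‖x‖ + 1) * ‖y‖ = -‖y‖ := by ring
    rw [h3] at h2
    refine h2.trans ?_
    have hy := norm_nonneg y
    have : (0:ℝ) ≤ max (‖x‖ * max R 0) 0 := le_max_right _ _
    linarith
  · have h1 : ((⟪x, y⟫ : ℝ) : EReal) - u y ≤ ((⟪x, y⟫ : ℝ) : EReal) - 0 :=
      EReal.sub_le_sub le_rfl (hu.1 y)
    rw [sub_zero] at h1
    refine h1.trans ?_
    rw [EReal.coe_le_coe_iff]
    calc ⟪x, y⟫ ≤ ‖x‖ * ‖y‖ := real_inner_le_norm x y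
      _ ≤ ‖x‖ * max R 0 := by
          apply mul_le_mul_of_nonneg_left _ (norm_nonneg x)
          exact le_max_of_le_left h.le
      _ ≤ max (‖x‖ * max R 0) 0 := le_max_left _ _

lemma legT_coe (hu : MemCs u) (x : V) :
    ((legT u x : ℝ) : EReal) = ⨆ y : V, ((⟪x, y⟫ : ℝ) : EReal) - u y := by
  obtain ⟨B, hB⟩ := legT_sup_le hu x
  exact EReal.coe_toReal (fun h => by simp [h] at hB) (legT_sup_ne_bot hu x)

lemma legT_nonneg (hu : MemCs u) (x : V) : 0 ≤ legT u x := by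
  have := legT_sup_nonneg hu x
  rw [← legT_coe hu x] at this
  exact_mod_cast this

lemma legT_term_le (hu : MemCs u) (x y : V) (hy : u y ≠ ⊤) :
    ⟪x, y⟫ - (u y).toReal ≤ legT u x := by
  have hb : u y ≠ ⊥ := fun h => by simpa [h] using hu.1 y
  have h1 : ((⟪x, y⟫ : ℝ) : EReal) - u y ≤ ((legT u x : ℝ) : EReal) := by
    rw [legT_coe hu x]
    exact le_iSup (fun y => ((⟪x, y⟫ : ℝ) : EReal) - u y) y
  rw [← EReal.coe_toReal hy hb, ← EReal.coe_sub, EReal.coe_le_coe_iff] at h1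
  exact h1

lemma legT_convexOn (hu : MemCs u) : ConvexOn ℝ univ (legT u) := by
  refine ⟨convex_univ, fun x _ y _ a b ha hb hab => ?_⟩
  have key : ((legT u (a • x + b • y) : ℝ) : EReal) ≤ ((a * legT u x + b * legT u y : ℝ) : EReal) := by
    rw [legT_coe hu]
    refine iSup_le fun s => ?_
    rcases eq_or_ne (u s) ⊤ with h | h
    · rw [h]
      rw [EReal.sub_top]; exact bot_le
    · have hb' : u s ≠ ⊥ := fun h' => by simpa [h'] using hu.1 s
      rw [← EReal.coe_toReal h hb', ← EReal.coe_sub, EReal.coe_le_coe_iff]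
      have hi : ⟪a • x + b • y, s⟫ = a * ⟪x, s⟫ + b * ⟪y, s⟫ := by
        rw [inner_add_left, real_inner_smul_left, real_inner_smul_left]
      rw [hi]
      have h1 : ⟪x, s⟫ - (u s).toReal ≤ legT u x := legT_term_le hu x s h
      have h2 : ⟪y, s⟫ - (u s).toReal ≤ legT u y := legT_term_le hu y s h
      calc a * ⟪x, s⟫ + b * ⟪y, s⟫ - (u s).toReal
          = a * (⟪x, s⟫ - (u s).toReal) + b * (⟪y, s⟫ - (u s).toReal) := by
            have : a * (u s).toReal + b * (u s).toReal = (u s).toReal := by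
              rw [← add_mul, hab, one_mul]
            linarith [mul_sub a (⟪x, s⟫) ((u s).toReal), mul_sub b (⟪y, s⟫) ((u s).toReal)]
        _ ≤ a * legT u x + b * legT u y :=
            add_le_add (mul_le_mul_of_nonneg_left h1 ha) (mul_le_mul_of_nonneg_left h2 hb)
  rw [smul_eq_mul, smul_eq_mul]; exact_mod_cast key

lemma iSup_projB_eq {n : ℕ} (u : EuclideanSpace ℝ (Fin n) → EReal)
    (H : Submodule ℝ (EuclideanSpace ℝ (Fin n))) (z : H) :
    (⨆ y : H, ((⟪z, y⟫ : ℝ) : EReal) - projB H u y)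
      = ⨆ s : EuclideanSpace ℝ (Fin n), ((⟪(z : EuclideanSpace ℝ (Fin n)), s⟫ : ℝ) : EReal) - u s := by
  apply le_antisymm
  · refine iSup_le fun y => ?_
    rw [projB, ereal_sub_iInf]
    refine iSup_le fun k => ?_
    have hin : (⟪z, y⟫ : ℝ) = ⟪(z : EuclideanSpace ℝ (Fin n)), (y : EuclideanSpace ℝ (Fin n)) + (k : EuclideanSpace ℝ (Fin n))⟫ := by
      rw [inner_add_right, Submodule.coe_inner,
        Submodule.inner_right_of_mem_orthogonal z.2 k.2, add_zero]
    rw [hin]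
    exact le_iSup (fun s => ((⟪(z : EuclideanSpace ℝ (Fin n)), s⟫ : ℝ) : EReal) - u s) _
  · refine iSup_le fun s => ?_
    obtain ⟨a, ha, b, hb, rfl⟩ := H.exists_add_mem_mem_orthogonal s
    have h1 : ((⟪(z : EuclideanSpace ℝ (Fin n)), a + b⟫ : ℝ) : EReal) - u (a + b)
        ≤ ((⟪z, (⟨a, ha⟩ : H)⟫ : ℝ) : EReal) - projB H u ⟨a, ha⟩ := by
      have hin : (⟪(z : EuclideanSpace ℝ (Fin n)), a + b⟫ : ℝ) = ⟪z, (⟨a, ha⟩ : H)⟫ := by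
        rw [inner_add_right, Submodule.coe_inner,
          Submodule.inner_right_of_mem_orthogonal z.2 hb, add_zero]
      rw [hin]
      refine EReal.sub_le_sub le_rfl ?_
      exact iInf_le (fun k : Hᗮ => u (a + (k : EuclideanSpace ℝ (Fin n)))) ⟨b, hb⟩
    exact h1.trans (le_iSup (fun y : H => ((⟪z, y⟫ : ℝ) : EReal) - projB H u y) _)

lemma legT_projB {n : ℕ} (u : EuclideanSpace ℝ (Fin n) → EReal)
    (H : Submodule ℝ (EuclideanSpace ℝ (Fin n))) (z : H) :
    legT (projB H u) z = legT u (z : EuclideanSpace ℝ (Fin n)) := by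
  unfold legT
  rw [iSup_projB_eq]

lemma minkowski2 {p : ℝ} (hp : 1 ≤ p) {a b a' b' : ℝ} (ha : 0 ≤ a) (hb : 0 ≤ b)
    (ha' : 0 ≤ a') (hb' : 0 ≤ b') :
    ((a + a') ^ p + (b + b') ^ p) ^ (1 / p)
      ≤ (a ^ p + b ^ p) ^ (1 / p) + (a' ^ p + b' ^ p) ^ (1 / p) := by
  have := Real.Lp_add_le_of_nonneg (s := (Finset.univ : Finset (Fin 2)))
    (f := ![a, b]) (g := ![a', b']) hp
    (by intro i _; fin_cases i <;> simpa) (by intro i _; fin_cases i <;> simpa)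
  simpa [Fin.sum_univ_two] using this

lemma rpow_homog {p t a b : ℝ} (hp : 1 ≤ p) (ht : 0 ≤ t) (ha : 0 ≤ a) (hb : 0 ≤ b) :
    ((t * a) ^ p + (t * b) ^ p) ^ (1 / p) = t * (a ^ p + b ^ p) ^ (1 / p) := by
  have hp0 : p ≠ 0 := by linarith
  rw [Real.mul_rpow ht ha, Real.mul_rpow ht hb, ← mul_add,
    Real.mul_rpow (Real.rpow_nonneg ht p) (by positivity),
    ← Real.rpow_mul ht, mul_one_div, div_self hp0, Real.rpow_one]

lemma rpow_mono2 {p a b a' b' : ℝ} (hp : 1 ≤ p) (ha : 0 ≤ a) (hb : 0 ≤ b)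
    (haa : a ≤ a') (hbb : b ≤ b') :
    (a ^ p + b ^ p) ^ (1 / p) ≤ (a' ^ p + b' ^ p) ^ (1 / p) := by
  apply Real.rpow_le_rpow (by positivity)
  · exact add_le_add (Real.rpow_le_rpow ha haa (by linarith))
      (Real.rpow_le_rpow hb hbb (by linarith))
  · positivity

lemma convexOn_lpnorm {V : Type*} [NormedAddCommGroup V] [InnerProductSpace ℝ V]
    {p : ℝ} (hp : 1 ≤ p) {F G : V → ℝ} (hF : ConvexOn ℝ univ F) (hG : ConvexOn ℝ univ G)
    (hF0 : ∀ s, 0 ≤ F s) (hG0 : ∀ s, 0 ≤ G s) :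
    ConvexOn ℝ univ (fun s => (F s ^ p + G s ^ p) ^ (1 / p)) := by
  refine ⟨convex_univ, fun x _ y _ a b ha hb hab => ?_⟩
  simp only [smul_eq_mul]
  calc (F (a • x + b • y) ^ p + G (a • x + b • y) ^ p) ^ (1 / p)
      ≤ ((a * F x + b * F y) ^ p + (a * G x + b * G y) ^ p) ^ (1 / p) := by
        refine rpow_mono2 hp (hF0 _) (hG0 _) ?_ ?_
        · simpa [smul_eq_mul] using hF.2 (mem_univ x) (mem_univ y) ha hb hab
        · simpa [smul_eq_mul] using hG.2 (mem_univ x) (mem_univ y) ha hb hab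
    _ ≤ ((a * F x) ^ p + (a * G x) ^ p) ^ (1 / p)
          + ((b * F y) ^ p + (b * G y) ^ p) ^ (1 / p) :=
        minkowski2 hp (mul_nonneg ha (hF0 x)) (mul_nonneg ha (hG0 x)) (mul_nonneg hb (hF0 y)) (mul_nonneg hb (hG0 y))
    _ = a * (F x ^ p + G x ^ p) ^ (1 / p) + b * (F y ^ p + G y ^ p) ^ (1 / p) := by
        rw [rpow_homog hp ha (hF0 x) (hG0 x), rpow_homog hp hb (hF0 y) (hG0 y)]

lemma exists_subgradient {E : Type*} [NormedAddCommGroup E] [InnerProductSpace ℝ E]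
    [FiniteDimensional ℝ E] {g : E → ℝ} (hg : ConvexOn ℝ univ g) :
    ∃ ξ : E, ∀ s, g 0 + ⟪ξ, s⟫ ≤ g s := by
  have : CompleteSpace E := FiniteDimensional.complete ℝ E
  have gcont : Continuous g := by
    have := hg.continuousOn isOpen_univ
    rwa [continuousOn_univ] at this
  set S : Set (E × ℝ) := {q | g q.1 < q.2} with hS
  have hSopen : IsOpen S := by
    have : S = (fun q : E × ℝ => q.2 - g q.1) ⁻¹' Ioi 0 := by
      ext q; simp [hS, sub_pos]
    rw [this]
    exact (continuous_snd.sub (gcont.comp continuous_fst)).isOpen_preimage _ isOpen_Ioi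
  have hSconv : Convex ℝ S := by
    rintro ⟨s₁, t₁⟩ h₁ ⟨s₂, t₂⟩ h₂ a b ha hb hab
    simp only [hS, mem_setOf_eq] at h₁ h₂ ⊢
    have := hg.2 (mem_univ s₁) (mem_univ s₂) ha hb hab
    have h3 : a • g s₁ + b • g s₂ < a * t₁ + b * t₂ := by
      simp only [smul_eq_mul]
      rcases eq_or_lt_of_le ha with rfl | ha'
      · simp only [zero_mul, zero_add]
        have hb1 : b = 1 := by linarith
        rw [hb1]; simpa using h₂
      · have hb2 : b * g s₂ ≤ b * t₂ := mul_le_mul_of_nonneg_left h₂.le hb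
        have ha2 : a * g s₁ < a * t₁ := by exact (mul_lt_mul_iff_right₀ ha').mpr h₁
        linarith
    exact lt_of_le_of_lt this h3
  have hpt : ((0 : E), g 0) ∉ S := by simp [hS]
  obtain ⟨f, hf⟩ := geometric_hahn_banach_point_open hSconv hSopen hpt
  set lam : ℝ := f (0, 1) with hlam
  have hsplit : ∀ s : E, ∀ t : ℝ, f (s, t) = f (s, 0) + t * lam := by
    intro s t
    have : (s, t) = (s, 0) + t • ((0 : E), (1 : ℝ)) := by
      simp [Prod.ext_iff]
    rw [this, map_add, map_smul, smul_eq_mul]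
  have hzero : f ((0 : E), (0 : ℝ)) = 0 := by
    rw [show ((0:E), (0:ℝ)) = (0 : E × ℝ) from rfl, map_zero]
  have hf0 : f ((0 : E), g 0) = g 0 * lam := by
    rw [hsplit, hzero, zero_add]
  have hlampos : 0 < lam := by
    have h1 := hf ((0 : E), g 0 + 1) (by simp [hS])
    rw [hf0, hsplit, hzero, zero_add] at h1
    nlinarith
  have hkey : ∀ s : E, g 0 * lam ≤ f (s, 0) + g s * lam := by
    intro s
    by_contra hcon
    push_neg at hcon
    set ε : ℝ := (g 0 * lam - f (s, 0) - g s * lam) / lam with hε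
    have hεpos : 0 < ε := div_pos (by linarith) hlampos
    have h1 := hf (s, g s + ε) (by simp [hS, hεpos])
    rw [hf0, hsplit] at h1
    have h2 : ε * lam = g 0 * lam - f (s, 0) - g s * lam := by
      rw [hε, div_mul_cancel₀ _ (ne_of_gt hlampos)]
    nlinarith
  refine ⟨(InnerProductSpace.toDual ℝ E).symm
    ((-lam⁻¹) • (f.comp (ContinuousLinearMap.inl ℝ E ℝ))), fun s => ?_⟩
  rw [InnerProductSpace.toDual_symm_apply]
  have hval : ((-lam⁻¹) • (f.comp (ContinuousLinearMap.inl ℝ E ℝ))) s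
      = -lam⁻¹ * f (s, 0) := by
    simp [ContinuousLinearMap.smul_apply]
  rw [hval]
  have h2 : (g 0 - g s) * lam ≤ f (s, 0) := by nlinarith [hkey s]
  have h3 : g 0 - g s ≤ f (s, 0) / lam := (le_div_iff₀ hlampos).mpr h2
  rw [neg_mul, inv_mul_eq_div]
  linarith

lemma projB_legE {V : Type*} [NormedAddCommGroup V] [InnerProductSpace ℝ V]
    [FiniteDimensional ℝ V] (w : V → ℝ)
    (hw : ConvexOn ℝ univ w) (H : Submodule ℝ V) (x : H) :
    (⨅ y : Hᗮ, legE w ((x : V) + (y : V)))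
      = legE (fun z : H => w (z : V)) x := by
  have hinnerzero : ∀ (z : H) (y : Hᗮ), ⟪(y : V), (z : V)⟫ = (0 : ℝ) := fun z y => by
    rw [real_inner_comm]
    exact Submodule.inner_right_of_mem_orthogonal z.2 y.2
  simp only [legE]
  set R : EReal := ⨆ z : H, ((⟪x, z⟫ - w (z : V) : ℝ) : EReal) with hR
  apply le_antisymm
  · -- hard direction
    rcases eq_or_ne R ⊤ with h | h
    · rw [h]; exact le_top
    have hbot : (⊥ : EReal) < R := by
      refine lt_of_lt_of_le (EReal.bot_lt_coe (⟪x, (0 : H)⟫ - w ((0 : H) : V))) ?_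
      exact le_iSup (fun z : H => ((⟪x, z⟫ - w (z : V) : ℝ) : EReal)) 0
    set c : ℝ := R.toReal with hc'
    have hcR : ((c : ℝ) : EReal) = R := EReal.coe_toReal h (ne_of_gt hbot)
    have hc : ∀ z : H, ⟪(x : V), (z : V)⟫ - w (z : V) ≤ c := by
      intro z
      have h1 : ((⟪x, z⟫ - w (z : V) : ℝ) : EReal) ≤ R :=
        le_iSup (fun z : H => ((⟪x, z⟫ - w (z : V) : ℝ) : EReal)) z
      rw [← hcR, EReal.coe_le_coe_iff] at h1
      rwa [← Submodule.coe_inner]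
    -- the partial inf-projection
    set pf : V → ℝ := fun s => sInf (range fun z : H => w (s + (z : V)) - ⟪(x : V), (z : V)⟫)
      with hpf
    have hne : ∀ s : V, (range fun z : H => w (s + (z : V)) - ⟪(x : V), (z : V)⟫).Nonempty :=
      fun s => ⟨_, mem_range_self 0⟩
    have hbdd : ∀ s : V, ∀ z : H,
        -(2 * c) - w (-s) ≤ w (s + (z : V)) - ⟪(x : V), (z : V)⟫ := by
      intro s z
      have hmid := hw.2 (mem_univ (s + (z : V))) (mem_univ (-s))
        (by norm_num : (0:ℝ) ≤ 1/2) (by norm_num : (0:ℝ) ≤ 1/2) (by norm_num)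
      have harg : (1/2 : ℝ) • (s + (z : V)) + (1/2 : ℝ) • (-s) = (((1/2 : ℝ) • z : H) : V) := by
        rw [Submodule.coe_smul]
        module
      rw [harg] at hmid
      have h2 := hc ((1/2 : ℝ) • z)
      have h3 : ⟪(x : V), ((((1/2 : ℝ) • z : H)) : V)⟫ = (1/2) * ⟪(x : V), (z : V)⟫ := by
        rw [Submodule.coe_smul, real_inner_smul_right]
      rw [h3] at h2
      simp only [smul_eq_mul] at hmid
      linarith
    have hbddB : ∀ s : V, BddBelow (range fun z : H => w (s + (z : V)) - ⟪(x : V), (z : V)⟫) :=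
      fun s => ⟨-(2 * c) - w (-s), by rintro r ⟨z, rfl⟩; exact hbdd s z⟩
    have hpf_le : ∀ (s : V) (z : H), pf s ≤ w (s + (z : V)) - ⟪(x : V), (z : V)⟫ :=
      fun s z => csInf_le (hbddB s) (mem_range_self z)
    have hpf0 : -c ≤ pf 0 := by
      refine le_csInf (hne 0) ?_
      rintro r ⟨z, rfl⟩
      have := hc z
      simp only [zero_add]
      linarith
    have hpfconv : ConvexOn ℝ univ pf := by
      refine ⟨convex_univ, fun x₁ _ x₂ _ a b ha hb hab => ?_⟩
      simp only [smul_eq_mul]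
      by_contra hcon
      push_neg at hcon
      set ε : ℝ := (pf (a • x₁ + b • x₂) - (a * pf x₁ + b * pf x₂)) / 2 with hε
      have hεpos : 0 < ε := by
        have : 0 < pf (a • x₁ + b • x₂) - (a * pf x₁ + b * pf x₂) := by linarith
        positivity
      obtain ⟨r₁, hr₁mem, hr₁⟩ := exists_lt_of_csInf_lt (hne x₁)
        (lt_add_of_pos_right (pf x₁) (half_pos hεpos))
      obtain ⟨r₂, hr₂mem, hr₂⟩ := exists_lt_of_csInf_lt (hne x₂)
        (lt_add_of_pos_right (pf x₂) (half_pos hεpos))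
      obtain ⟨z₁, rfl⟩ := hr₁mem
      obtain ⟨z₂, rfl⟩ := hr₂mem
      simp only at hr₁ hr₂
      have hmid := hw.2 (mem_univ (x₁ + (z₁ : V))) (mem_univ (x₂ + (z₂ : V))) ha hb hab
      have harg : a • (x₁ + (z₁ : V)) + b • (x₂ + (z₂ : V))
          = (a • x₁ + b • x₂) + ((a • z₁ + b • z₂ : H) : V) := by
        push_cast
        module
      rw [harg] at hmid
      have hinner : ⟪(x : V), ((a • z₁ + b • z₂ : H) : V)⟫
          = a * ⟪(x : V), (z₁ : V)⟫ + b * ⟪(x : V), (z₂ : V)⟫ := by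
        push_cast
        rw [inner_add_right, real_inner_smul_right, real_inner_smul_right]
      have hle := hpf_le (a • x₁ + b • x₂) (a • z₁ + b • z₂)
      simp only [smul_eq_mul] at hmid
      have ha1 : a * (w (x₁ + (z₁ : V)) - ⟪(x : V), (z₁ : V)⟫) ≤ a * (pf x₁ + ε/2) :=
        mul_le_mul_of_nonneg_left hr₁.le ha
      have hb1 : b * (w (x₂ + (z₂ : V)) - ⟪(x : V), (z₂ : V)⟫) ≤ b * (pf x₂ + ε/2) :=
        mul_le_mul_of_nonneg_left hr₂.le hb
      rw [hinner] at hle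
      have hsum : a * (ε/2) + b * (ε/2) = ε/2 := by
        rw [← add_mul, hab, one_mul]
      nlinarith [hε, hεpos]
    have hpshift : ∀ z' : H, pf ((z' : H) : V) ≤ pf 0 + ⟪(x : V), ((z' : H) : V)⟫ := by
      intro z'
      have key : ∀ z'' : H, pf ((z' : H) : V) - ⟪(x : V), ((z' : H) : V)⟫
          ≤ w (0 + ((z'' : H) : V)) - ⟪(x : V), ((z'' : H) : V)⟫ := by
        intro z''
        have h1 := hpf_le ((z' : H) : V) (z'' - z')
        have h2 : ((z' : H) : V) + ((z'' - z' : H) : V) = 0 + ((z'' : H) : V) := by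
          push_cast
          module
        have h3 : ⟪(x : V), ((z'' - z' : H) : V)⟫
            = ⟪(x : V), ((z'' : H) : V)⟫ - ⟪(x : V), ((z' : H) : V)⟫ := by
          push_cast
          rw [inner_sub_right]
        rw [h2, h3] at h1
        linarith
      have h4 : pf ((z' : H) : V) - ⟪(x : V), ((z' : H) : V)⟫ ≤ pf 0 := by
        refine le_csInf (hne 0) ?_
        rintro r ⟨z'', rfl⟩
        simpa using key z''
      linarith
    obtain ⟨ξ, hξ⟩ := exists_subgradient hpfconv
    have hξle : ∀ z' : H, ⟪ξ, ((z' : H) : V)⟫ ≤ ⟪(x : V), ((z' : H) : V)⟫ := by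
      intro z'
      have h1 := hξ ((z' : H) : V)
      have h2 := hpshift z'
      linarith
    have hymem : ξ - (x : V) ∈ Hᗮ := by
      rw [Submodule.mem_orthogonal]
      intro uu huu
      have h1 := hξle ⟨uu, huu⟩
      have h2 := hξle (-⟨uu, huu⟩)
      push_cast at h2
      rw [inner_neg_right, inner_neg_right] at h2
      have h3 : ⟪ξ, uu⟫ = ⟪(x : V), uu⟫ := by
        simp only [Submodule.coe_mk] at h1 h2 ⊢
        linarith
      rw [inner_sub_right]
      have c1 := real_inner_comm uu ξ
      have c2 := real_inner_comm uu ((x : V))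
      linarith
    have hbound : ∀ s : V, ⟪ξ, s⟫ - w s ≤ c := by
      intro s
      have h1 := hξ s
      have h2 := hpf_le s 0
      rw [Submodule.coe_zero, add_zero, inner_zero_right, sub_zero] at h2
      linarith
    refine iInf_le_of_le ⟨ξ - (x : V), hymem⟩ ?_
    have harg : (x : V) + (ξ - (x : V)) = ξ := by abel
    simp only [Submodule.coe_mk, harg]
    rw [← hcR]
    exact iSup_le fun s => EReal.coe_le_coe_iff.mpr (hbound s)
  · -- easy direction
    refine le_iInf fun y => ?_
    refine iSup_le fun z => ?_
    have hin : ⟪((x : V) + (y : V)), (z : V)⟫ = ⟪x, z⟫ := by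
      rw [inner_add_left, hinnerzero z y, add_zero, Submodule.coe_inner]
    calc ((⟪x, z⟫ - w (z : V) : ℝ) : EReal)
        = ((⟪((x : V) + (y : V)), (z : V)⟫ - w (z : V) : ℝ) : EReal) := by rw [hin]
      _ ≤ _ := le_iSup (fun s : V => ((⟪((x : V) + (y : V)), s⟫ - w s : ℝ) : EReal)) (z : V)

/-- For `p ≥ 1`, `u, v ∈ C_s(ℝⁿ)`, `α, β ≥ 0` and a linear
subspace `H` of `ℝⁿ`, the inf-projection onto `H` of the `L_p` addition of `u` and
`v` equals the `L_p` addition, computed within `H`, of the inf-projections: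
`[(α ⊠_p u) ⊞_p (β ⊠_p v)]_H = (α ⊠_p u_H) ⊞_p (β ⊠_p v_H)`. -/
theorem stmt_19 {n : ℕ} (p : ℝ) (hp : 1 ≤ p) (α β : ℝ) (hα : 0 ≤ α) (hβ : 0 ≤ β)
    (u v : EuclideanSpace ℝ (Fin n) → EReal) (hu : MemCs u) (hv : MemCs v)
    (H : Submodule ℝ (EuclideanSpace ℝ (Fin n))) :
    projB H (lpAdd p α β u v)
      = lpAdd p α β (projB H u) (projB H v) := by
  have hp0 : p ≠ 0 := by positivity
  set w : EuclideanSpace ℝ (Fin n) → ℝ :=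
    fun s => (α * legT u s ^ p + β * legT v s ^ p) ^ (1 / p) with hwdef
  have hwconv : ConvexOn ℝ univ w := by
    have hid : w = fun s =>
        ((α ^ (1/p) * legT u s) ^ p + (β ^ (1/p) * legT v s) ^ p) ^ (1/p) := by
      funext s
      have h1 : (α ^ (1/p) * legT u s) ^ p = α * legT u s ^ p := by
        rw [Real.mul_rpow (Real.rpow_nonneg hα _) (legT_nonneg hu s),
          ← Real.rpow_mul hα, one_div_mul_cancel hp0, Real.rpow_one]
      have h2 : (β ^ (1/p) * legT v s) ^ p = β * legT v s ^ p := by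
        rw [Real.mul_rpow (Real.rpow_nonneg hβ _) (legT_nonneg hv s),
          ← Real.rpow_mul hβ, one_div_mul_cancel hp0, Real.rpow_one]
      rw [hwdef, h1, h2]
    rw [hid]
    refine convexOn_lpnorm hp ?_ ?_ ?_ ?_
    · simpa [smul_eq_mul, Pi.smul_def] using (legT_convexOn hu).smul (Real.rpow_nonneg hα (1/p))
    · simpa [smul_eq_mul, Pi.smul_def] using (legT_convexOn hv).smul (Real.rpow_nonneg hβ (1/p))
    · exact fun s => mul_nonneg (Real.rpow_nonneg hα _) (legT_nonneg hu s)
    · exact fun s => mul_nonneg (Real.rpow_nonneg hβ _) (legT_nonneg hv s)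
  funext x
  have hfun : (fun z : H => (α * legT (projB H u) z ^ p + β * legT (projB H v) z ^ p) ^ (1 / p))
      = fun z : H => w (z : EuclideanSpace ℝ (Fin n)) := by
    funext z
    rw [legT_projB u H z, legT_projB v H z]
  calc projB H (lpAdd p α β u v) x
      = ⨅ y : Hᗮ, legE w ((x : EuclideanSpace ℝ (Fin n)) + (y : EuclideanSpace ℝ (Fin n))) := rfl
    _ = legE (fun z : H => w (z : EuclideanSpace ℝ (Fin n))) x := projB_legE w hwconv H x
    _ = lpAdd p α β (projB H u) (projB H v) x := by
        rw [lpAdd, ← hfun]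
end
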